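/- arXiv:2312.07793 — 3 statements merged into one kernel-verified Lean document; each statement's English description precedes it below -/
import Mathlib

section
/- Let (X,T) and (Y,S) be dynamical systems with metrics d on X and d′ on Y. For any equivariant continuous map π : (X,T) → (Y,S) we have lmdimm(π,T,d) = liminf_{ε→0} { lim_{δ→0} ( lim_{N→∞} [sup_{y∈Y} log #(π^{-1}(B_δ(y, d′_N)), d_N, ε)] / (N log(1/ε)) ) }. -/
open Filter Topology Pointwise ENNReal
open scoped ENat

noncomputable section

/-- The diameter of a set with respect to a distance function, valued in `ℝ≥0∞`. -/
def setDiam {X : Type*} (d : X → X → ℝ) (A : Set X) : ℝ≥0∞ :=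
  ⨆ x ∈ A, ⨆ y ∈ A, ENNReal.ofReal (d x y)

/-- `coverNum d A ε` is the minimal number of relatively open subsets of `A` of
`d`-diameter `< ε` needed to cover `A` (it is `0` if `A = ∅`). -/
def coverNum {X : Type*} [TopologicalSpace X] (d : X → X → ℝ) (A : Set X) (ε : ℝ) : ℕ :=
  sInf {n : ℕ | ∃ U : Fin n → Set X, (∀ i, IsOpen (U i)) ∧ A ⊆ (⋃ i, U i) ∧
    ∀ i, setDiam d (U i ∩ A) < ENNReal.ofReal ε}

/-- The dynamical (Bowen) metric `d_N(x,y) = max_{0 ≤ n < N} d(Tⁿx, Tⁿy)`. -/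
def dynDist {X : Type*} (T : X → X) (d : X → X → ℝ) (N : ℕ) (x y : X) : ℝ :=
  ⨆ n : Fin N, d (T^[(n : ℕ)] x) (T^[(n : ℕ)] y)

/-- `widimEps X d ε` is the minimal `n` such that there is a finite simplicial complex of
dimension (at most) `n` and an `ε`-embedding from `X` into it. -/
def widimEps (X : Type*) [TopologicalSpace X] (d : X → X → ℝ) (ε : ℝ) : ℕ∞ :=
  sInf {n : ℕ∞ | ∃ m : ℕ, n = (m : ℕ∞) ∧
    ∃ (k : ℕ) (K : Geometry.SimplicialComplex ℝ (Fin k → ℝ)), K.faces.Finite ∧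
      (∀ s ∈ K.faces, s.card ≤ m + 1) ∧
      ∃ f : X → K.space, Continuous f ∧
        ∀ p : K.space, setDiam d (f ⁻¹' {p}) < ENNReal.ofReal ε}

/-- The topological dimension `dim X = lim_{ε → 0} widim_ε(X, d)`. -/
def topDim (X : Type*) [TopologicalSpace X] (d : X → X → ℝ) : ℕ∞ :=
  limsup (fun ε : ℝ => widimEps X d ε) (𝓝[>] 0)

/-- The mean dimension `mdim(X,T) = lim_{ε→0} lim_{N→∞} widim_ε(X, d_N)/N`. -/
def meanDim (X : Type*) [TopologicalSpace X] (T : X → X) (d : X → X → ℝ) : EReal :=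
  limsup (fun ε : ℝ =>
    limsup (fun N : ℕ =>
      (((widimEps X (dynDist T d N) ε : ℕ∞) : ℝ≥0∞) : EReal) / (N : EReal)) atTop)
    (𝓝[>] 0)

/-- `sup_{y ∈ Y} log #(π⁻¹(y), d_N, ε)`. -/
def fiberLogCover {X Y : Type*} [TopologicalSpace X] (T : X → X) (d : X → X → ℝ)
    (π : X → Y) (ε : ℝ) (N : ℕ) : EReal :=
  ⨆ y : Y, ((Real.log (coverNum (dynDist T d N) (π ⁻¹' {y}) ε) : ℝ) : EReal)

/-- The lower conditional metric mean dimension `lmdimm(π, T, d)`. -/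
def condMetricMeanDim {X Y : Type*} [TopologicalSpace X] (T : X → X) (d : X → X → ℝ)
    (π : X → Y) : EReal :=
  liminf (fun ε : ℝ =>
    limsup (fun N : ℕ =>
      fiberLogCover T d π ε N / ((N : EReal) * ((Real.log (1/ε) : ℝ) : EReal))) atTop)
    (𝓝[>] 0)

/-- The topological conditional entropy `h_top(π, T)`. -/
def condEntropy {X Y : Type*} [TopologicalSpace X] (T : X → X) (d : X → X → ℝ)
    (π : X → Y) : EReal :=
  limsup (fun ε : ℝ =>
    limsup (fun N : ℕ => fiberLogCover T d π ε N / (N : EReal)) atTop) (𝓝[>] 0)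

/-- The topological entropy `h_top(X, T)`. -/
def topEntropy (X : Type*) [TopologicalSpace X] (T : X → X) (d : X → X → ℝ) : EReal :=
  limsup (fun ε : ℝ =>
    limsup (fun N : ℕ =>
      ((Real.log (coverNum (dynDist T d N) Set.univ ε) : ℝ) : EReal) / (N : EReal)) atTop)
    (𝓝[>] 0)

/-- The lower metric mean dimension `lmdimm(X, T, d)`. -/
def metricMeanDim (X : Type*) [TopologicalSpace X] (T : X → X) (d : X → X → ℝ) : EReal :=
  liminf (fun ε : ℝ =>
    limsup (fun N : ℕ =>
      ((Real.log (coverNum (dynDist T d N) Set.univ ε) : ℝ) : EReal) /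
        ((N : EReal) * ((Real.log (1/ε) : ℝ) : EReal))) atTop)
    (𝓝[>] 0)

/-- The cube `[0,1]^a ⊆ ℝ^a`, where `ℝ^a` carries the max-norm. -/
abbrev Cube (a : ℕ) : Set (Fin a → ℝ) := Set.Icc 0 1

/-- The full shift `([0,1]^a)^ℤ`. -/
abbrev FullShift (a : ℕ) := ℤ → Cube a

/-- The shift map `σ` on `([0,1]^a)^ℤ`. -/
def shiftMap (a : ℕ) : FullShift a → FullShift a := fun x n => x (n + 1)

/-- The metric `D((xₙ), (yₙ)) = Σ_{n ∈ ℤ} 2^{-|n|} ‖xₙ - yₙ‖_∞` on the full shift. -/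
def shiftDist (a : ℕ) (x y : FullShift a) : ℝ :=
  ∑' n : ℤ, (2 : ℝ) ^ (-|n|) * ‖(x n : Fin a → ℝ) - (y n : Fin a → ℝ)‖


/-- A simplicial (i.e. face-wise affine) map on a simplicial complex `K`. -/
def IsSimplicialMap {E F : Type*} [AddCommGroup E] [Module ℝ E] [AddCommGroup F] [Module ℝ F]
    (K : Geometry.SimplicialComplex ℝ E) (g : E → F) : Prop :=
  ∀ s ∈ K.faces, ∀ w : E → ℝ, (∀ v ∈ s, 0 ≤ w v) → (∑ v ∈ s, w v) = 1 →
    g (∑ v ∈ s, w v • v) = ∑ v ∈ s, w v • g v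

/-- The projection `[0,1]^a → [0,1]^b` onto the first `b` coordinates (for `b ≤ a`). -/
def projCube {a b : ℕ} (h : b ≤ a) (x : Cube a) : Cube b :=
  ⟨fun i => (x : Fin a → ℝ) (Fin.castLE h i),
    ⟨fun i => x.2.1 (Fin.castLE h i), fun i => x.2.2 (Fin.castLE h i)⟩⟩
namespace CMMD

variable {X Y : Type*}

section dyn
variable [MetricSpace X] {T : X → X}

lemma dynDist_nonneg (T : X → X) (N : ℕ) (x y : X) :
    0 ≤ dynDist T (fun p q => dist p q) N x y := by
  rcases isEmpty_or_nonempty (Fin N) with h | h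
  · rw [dynDist, Real.iSup_of_isEmpty]
  · obtain ⟨n⟩ := h
    rw [dynDist]
    exact le_trans dist_nonneg
      (le_ciSup (Set.Finite.bddAbove (Set.finite_range
        (fun n : Fin N => dist (T^[(n:ℕ)] x) (T^[(n:ℕ)] y)))) n)

lemma dynDist_le (T : X → X) {N : ℕ} {x y : X} {r : ℝ} (hr : 0 ≤ r)
    (h : ∀ n < N, dist (T^[n] x) (T^[n] y) ≤ r) :
    dynDist T (fun p q => dist p q) N x y ≤ r := by
  rcases isEmpty_or_nonempty (Fin N) with hN | hN
  · rw [dynDist, Real.iSup_of_isEmpty]; exact hr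
  · rw [dynDist]; exact ciSup_le fun n => h n n.2

lemma le_dynDist (T : X → X) {N n : ℕ} (hn : n < N) (x y : X) :
    dist (T^[n] x) (T^[n] y) ≤ dynDist T (fun p q => dist p q) N x y := by
  rw [dynDist]
  exact le_ciSup (Set.Finite.bddAbove (Set.finite_range
    (fun n : Fin N => dist (T^[(n:ℕ)] x) (T^[(n:ℕ)] y)))) (⟨n, hn⟩ : Fin N)

lemma dynDist_self (T : X → X) (N : ℕ) (x : X) :
    dynDist T (fun p q => dist p q) N x x = 0 :=
  le_antisymm (dynDist_le T le_rfl (fun n _ => by simp)) (dynDist_nonneg T N x x)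

lemma dynDist_comm (T : X → X) (N : ℕ) (x y : X) :
    dynDist T (fun p q => dist p q) N x y = dynDist T (fun p q => dist p q) N y x := by
  unfold dynDist; simp_rw [dist_comm]

lemma dynDist_triangle (T : X → X) (N : ℕ) (x y z : X) :
    dynDist T (fun p q => dist p q) N x z ≤
      dynDist T (fun p q => dist p q) N x y + dynDist T (fun p q => dist p q) N y z := by
  refine dynDist_le T (add_nonneg (dynDist_nonneg T N x y) (dynDist_nonneg T N y z)) ?_
  intro n hn
  exact le_trans (dist_triangle _ (T^[n] y) _)
    (add_le_add (le_dynDist T hn x y) (le_dynDist T hn y z))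

lemma dynDist_mono_le (T : X → X) {N M : ℕ} (h : N ≤ M) (x y : X) :
    dynDist T (fun p q => dist p q) N x y ≤ dynDist T (fun p q => dist p q) M x y :=
  dynDist_le T (dynDist_nonneg T M x y) fun n hn => le_dynDist T (lt_of_lt_of_le hn h) x y

/-- `d_m(T^[s] x, T^[s] y) ≤ d_N(x,y)` when `s + m ≤ N`. -/
lemma dynDist_iterate_le (T : X → X) {m s N : ℕ} (h : s + m ≤ N) (x y : X) :
    dynDist T (fun p q => dist p q) m (T^[s] x) (T^[s] y) ≤
      dynDist T (fun p q => dist p q) N x y := by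
  refine dynDist_le T (dynDist_nonneg T N x y) fun n hn => ?_
  have : dist (T^[n] (T^[s] x)) (T^[n] (T^[s] y)) = dist (T^[n + s] x) (T^[n + s] y) := by
    rw [Function.iterate_add_apply, Function.iterate_add_apply]
  rw [this]
  exact le_dynDist T (by omega) x y

lemma continuous_dynDist (hT : Continuous T) (N : ℕ) :
    Continuous (fun p : X × X => dynDist T (fun p q => dist p q) N p.1 p.2) := by
  rcases isEmpty_or_nonempty (Fin N) with hN | hN
  · simp only [dynDist, Real.iSup_of_isEmpty]; exact continuous_const
  · have : (fun p : X × X => dynDist T (fun p q => dist p q) N p.1 p.2) =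
        fun p : X × X => (Finset.univ : Finset (Fin N)).sup' Finset.univ_nonempty
          (fun n => dist (T^[(n : ℕ)] p.1) (T^[(n : ℕ)] p.2)) := by
      funext p
      rw [dynDist, ← Finset.sup'_univ_eq_ciSup]
    rw [this]
    refine continuous_iff_continuousAt.2 fun p => ?_
    refine ContinuousAt.finset_sup'_apply Finset.univ_nonempty fun n _ => ?_
    exact ((continuous_dist.comp (((hT.iterate _).comp continuous_fst).prodMk
      ((hT.iterate _).comp continuous_snd))).continuousAt)

end dyn

end CMMD

namespace CMMD

variable {X : Type*}

section diam
variable {d : X → X → ℝ} {A B : Set X}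

lemma setDiam_mono (h : A ⊆ B) : setDiam d A ≤ setDiam d B := by
  refine iSup₂_le fun x hx => iSup₂_le fun y hy => ?_
  exact le_trans (le_refl _) (le_iSup₂_of_le x (h hx) (le_iSup₂_of_le y (h hy) le_rfl))

lemma setDiam_le {r : ℝ} (h : ∀ x ∈ A, ∀ y ∈ A, d x y ≤ r) :
    setDiam d A ≤ ENNReal.ofReal r :=
  iSup₂_le fun x hx => iSup₂_le fun y hy => ENNReal.ofReal_le_ofReal (h x hx y hy)

lemma le_setDiam {x y : X} (hx : x ∈ A) (hy : y ∈ A) :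
    ENNReal.ofReal (d x y) ≤ setDiam d A :=
  le_iSup₂_of_le x hx (le_iSup₂_of_le y hy le_rfl)

lemma dist_lt_of_setDiam_lt {x y : X} {ε : ℝ} (hε : 0 < ε) (hx : x ∈ A) (hy : y ∈ A)
    (h : setDiam d A < ENNReal.ofReal ε) : d x y < ε := by
  rcases le_or_gt (d x y) 0 with h0 | h0
  · exact lt_of_le_of_lt h0 hε
  · have := lt_of_le_of_lt (le_setDiam hx hy) h
    exact (ENNReal.ofReal_lt_ofReal_iff_of_nonneg h0.le).1 this

end diam

section cover
variable [TopologicalSpace X]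

/-- The set of achievable cover cardinalities. -/
def coverSet (d : X → X → ℝ) (A : Set X) (ε : ℝ) : Set ℕ :=
  {n : ℕ | ∃ U : Fin n → Set X, (∀ i, IsOpen (U i)) ∧ A ⊆ (⋃ i, U i) ∧
    ∀ i, setDiam d (U i ∩ A) < ENNReal.ofReal ε}

lemma coverNum_def (d : X → X → ℝ) (A : Set X) (ε : ℝ) :
    coverNum d A ε = sInf (coverSet d A ε) := rfl

lemma card_mem_coverSet {d : X → X → ℝ} {A : Set X} {ε : ℝ} {ι : Type*} [Fintype ι]
    (U : ι → Set X) (hO : ∀ i, IsOpen (U i)) (hcov : A ⊆ ⋃ i, U i)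
    (hdiam : ∀ i, setDiam d (U i ∩ A) < ENNReal.ofReal ε) :
    Fintype.card ι ∈ coverSet d A ε := by
  classical
  refine ⟨fun j => U ((Fintype.equivFin ι).symm j), fun j => hO _, ?_, fun j => hdiam _⟩
  refine hcov.trans (Set.iUnion_subset fun i => ?_)
  exact Set.subset_iUnion_of_subset (Fintype.equivFin ι i)
    (by rw [Equiv.symm_apply_apply])

lemma coverNum_le_card {d : X → X → ℝ} {A : Set X} {ε : ℝ} {ι : Type*} [Fintype ι]
    (U : ι → Set X) (hO : ∀ i, IsOpen (U i)) (hcov : A ⊆ ⋃ i, U i)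
    (hdiam : ∀ i, setDiam d (U i ∩ A) < ENNReal.ofReal ε) :
    coverNum d A ε ≤ Fintype.card ι :=
  Nat.sInf_le (card_mem_coverSet U hO hcov hdiam)

lemma exists_optimal_cover {d : X → X → ℝ} {A : Set X} {ε : ℝ}
    (h : (coverSet d A ε).Nonempty) :
    ∃ U : Fin (coverNum d A ε) → Set X, (∀ i, IsOpen (U i)) ∧ A ⊆ (⋃ i, U i) ∧
      ∀ i, setDiam d (U i ∩ A) < ENNReal.ofReal ε :=
  Nat.sInf_mem h

lemma coverNum_mono {d : X → X → ℝ} {A B : Set X} {ε : ℝ} (hAB : A ⊆ B)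
    (h : (coverSet d B ε).Nonempty) : coverNum d A ε ≤ coverNum d B ε := by
  obtain ⟨U, hO, hcov, hdiam⟩ := exists_optimal_cover h
  refine Nat.sInf_le ⟨U, hO, hAB.trans hcov, fun i => ?_⟩
  exact lt_of_le_of_lt (setDiam_mono (Set.inter_subset_inter_right _ hAB)) (hdiam i)

end cover

end CMMD

namespace CMMD

section compactcover
variable {X : Type*} [MetricSpace X] [CompactSpace X] {T : X → X}

lemma coverSet_dyn_nonempty (hT : Continuous T) (m : ℕ) {ε : ℝ} (hε : 0 < ε) (A : Set X) :
    (coverSet (dynDist T (fun p q => dist p q) m) A ε).Nonempty := by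
  classical
  set ρ : X → X → ℝ := dynDist T (fun p q => dist p q) m with hρ
  have hcont : Continuous fun p : X × X => ρ p.1 p.2 := continuous_dynDist hT m
  set B : X → Set X := fun x => {x' | ρ x x' < ε / 3} with hB
  have hBo : ∀ x, IsOpen (B x) := fun x =>
    isOpen_lt (hcont.comp (continuous_const.prodMk continuous_id)) continuous_const
  have hmem : ∀ x : X, x ∈ B x := fun x => by
    simp only [hB, Set.mem_setOf_eq, hρ, dynDist_self]; linarith
  obtain ⟨t, ht⟩ := isCompact_univ.elim_finite_subcover B hBo
    (fun x _ => Set.mem_iUnion.2 ⟨x, hmem x⟩)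
  refine ⟨Fintype.card {x // x ∈ t}, card_mem_coverSet (fun i : {x // x ∈ t} => B i.1)
    (fun i => hBo _) ?_ ?_⟩
  · intro x _
    have := ht (Set.mem_univ x)
    simp only [Set.mem_iUnion] at this ⊢
    obtain ⟨i, hi, hx⟩ := this
    exact ⟨⟨i, hi⟩, hx⟩
  · intro i
    have hb : ∀ x' ∈ B i.1 ∩ A, ∀ x'' ∈ B i.1 ∩ A, ρ x' x'' ≤ 2 * (ε / 3) := by
      rintro x' ⟨h1, -⟩ x'' ⟨h2, -⟩
      have := dynDist_triangle T m x' i.1 x''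
      rw [← hρ] at this
      have h1' : ρ x' i.1 < ε / 3 := by rw [hρ, dynDist_comm]; exact h1
      simp only [hB, Set.mem_setOf_eq] at h2
      linarith
    refine lt_of_le_of_lt (setDiam_le hb) ?_
    rw [ENNReal.ofReal_lt_ofReal_iff hε]
    linarith

/-- The join/product bound for covering numbers. -/
lemma coverNum_prod_le {ε : ℝ} (hε : 0 < ε) {ι : Type*} [Fintype ι] [Nonempty ι]
    {A : Set X} (f : ι → X → X) (hf : ∀ j, Continuous (f j)) (Aj : ι → Set X)
    (ρ : X → X → ℝ) (ρj : ι → X → X → ℝ)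
    (hsub : ∀ j, ∀ x ∈ A, f j x ∈ Aj j)
    (hdom : ∀ x x', ∃ j, ρ x x' ≤ ρj j (f j x) (f j x'))
    (hcov : ∀ j, (coverSet (ρj j) (Aj j) ε).Nonempty) :
    coverNum ρ A ε ≤ ∏ j, coverNum (ρj j) (Aj j) ε := by
  classical
  choose U hO hcovj hdiam using fun j => exists_optimal_cover (hcov j)
  have key : coverNum ρ A ε ≤ Fintype.card (∀ j, Fin (coverNum (ρj j) (Aj j) ε)) := by
    refine coverNum_le_card (fun σ : ∀ j, Fin (coverNum (ρj j) (Aj j) ε) =>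
      ⋂ j, (f j) ⁻¹' (U j (σ j))) (fun σ => isOpen_iInter_of_finite
        (fun j => (hO j _).preimage (hf j))) ?_ ?_
    · intro x hx
      have : ∀ j, ∃ i, f j x ∈ U j i := fun j =>
        Set.mem_iUnion.1 (hcovj j (hsub j x hx))
      choose σ hσ using this
      exact Set.mem_iUnion.2 ⟨σ, Set.mem_iInter.2 fun j => hσ j⟩
    · intro σ
      set D : ℝ≥0∞ := ⨆ j, setDiam (ρj j) (U j (σ j) ∩ Aj j) with hD
      have hDlt : D < ENNReal.ofReal ε := by
        obtain ⟨j, hj⟩ := exists_eq_ciSup_of_finite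
          (f := fun j => setDiam (ρj j) (U j (σ j) ∩ Aj j))
        rw [hD, ← hj]
        exact hdiam j _
      refine lt_of_le_of_lt ?_ hDlt
      refine iSup₂_le fun x hx => iSup₂_le fun y hy => ?_
      obtain ⟨j, hj⟩ := hdom x y
      refine le_trans (ENNReal.ofReal_le_ofReal hj) ?_
      refine le_trans (le_setDiam (A := U j (σ j) ∩ Aj j) ⟨?_, hsub j x hx.2⟩ ⟨?_, hsub j y hy.2⟩) (by rw [hD]; exact le_iSup (fun j => setDiam (ρj j) (U j (σ j) ∩ Aj j)) j)
      · exact Set.mem_iInter.1 hx.1 j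
      · exact Set.mem_iInter.1 hy.1 j
  simpa using key

end compactcover

end CMMD

namespace CMMD

lemma setDiam_empty {X : Type*} (d : X → X → ℝ) : setDiam d (∅ : Set X) = 0 := by
  simp [setDiam]

lemma exists_pos_disjoint {Z : Type*} [TopologicalSpace Z] {s : Set Z} (hs : IsCompact s)
    (K : ℝ → Set Z) (hKc : ∀ δ, IsClosed (K δ)) (hmono : ∀ ⦃δ δ' : ℝ⦄, δ ≤ δ' → K δ ⊆ K δ')
    (hint : (s ∩ ⋂ δ : {δ : ℝ // 0 < δ}, K δ.1) = ∅) :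
    ∃ δ : ℝ, 0 < δ ∧ s ∩ K δ = ∅ := by
  classical
  obtain ⟨t, ht⟩ := hs.elim_finite_subfamily_closed _ (fun δ : {δ : ℝ // 0 < δ} => hKc δ.1) hint
  rcases t.eq_empty_or_nonempty with h | h
  · subst h
    simp only [Finset.notMem_empty, Set.iInter_of_empty, Set.iInter_univ,
      Set.inter_univ] at ht
    exact ⟨1, one_pos, by rw [ht, Set.empty_inter]⟩
  · refine ⟨t.inf' h (fun i => i.1), ?_, ?_⟩
    · exact (Finset.lt_inf'_iff h).2 fun i _ => i.2
    · refine Set.eq_empty_of_subset_empty ?_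
      rw [← ht]
      refine Set.inter_subset_inter_right _ ?_
      refine Set.subset_iInter₂ fun i hi => hmono (Finset.inf'_le _ hi)

section uniform
variable {X Y : Type*} [MetricSpace X] [CompactSpace X] [MetricSpace Y] [CompactSpace Y]
variable {T : X → X} {S : Y → Y} {π : X → Y}

lemma exists_delta_point (hT : Continuous T) (hS : Continuous S) (hπ : Continuous π)
    {m : ℕ} (hm : 1 ≤ m) {ε : ℝ} (hε : 0 < ε) (y : Y) :
    ∃ δ : ℝ, 0 < δ ∧
      coverNum (dynDist T (fun p q => dist p q) m)
        (π ⁻¹' {z | dynDist S (fun p q => dist p q) m z y ≤ δ}) ε ≤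
      coverNum (dynDist T (fun p q => dist p q) m) (π ⁻¹' {y}) ε := by
  classical
  set ρ : X → X → ℝ := dynDist T (fun p q => dist p q) m with hρ
  have hcρ : Continuous fun p : X × X => ρ p.1 p.2 := continuous_dynDist hT m
  set dy : Y → ℝ := fun z => dynDist S (fun p q => dist p q) m z y with hdy
  have hdyc : Continuous dy :=
    (continuous_dynDist hS m).comp (continuous_id.prodMk continuous_const)
  set K : ℝ → Set X := fun δ => π ⁻¹' {z | dy z ≤ δ} with hK
  have hKc : ∀ δ, IsClosed (K δ) := fun δ =>
    (isClosed_le hdyc continuous_const).preimage hπ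
  have hKmono : ∀ ⦃δ δ' : ℝ⦄, δ ≤ δ' → K δ ⊆ K δ' := fun δ δ' h x hx =>
    le_trans hx h
  set F : Set X := π ⁻¹' {y} with hF
  have hFc : IsClosed F := isClosed_singleton.preimage hπ
  have hKF : (⋂ δ : {δ : ℝ // 0 < δ}, K δ.1) = F := by
    ext x
    simp only [Set.mem_iInter, hK, Set.mem_preimage, Set.mem_setOf_eq, hF,
      Set.mem_singleton_iff]
    constructor
    · intro h
      have h0 : dy (π x) ≤ 0 := by
        refine le_of_forall_pos_le_add fun δ hδ => ?_
        simpa using h ⟨δ, hδ⟩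
      have h1 : dist (π x) y ≤ dy (π x) := by
        have := le_dynDist S (show 0 < m from hm) (π x) y
        simpa using this
      have : dist (π x) y = 0 := le_antisymm (h1.trans h0) dist_nonneg
      exact dist_eq_zero.1 this
    · intro h δ
      rw [h, hdy]
      simp only [dynDist_self]
      exact δ.2.le
  -- optimal cover of the fiber
  obtain ⟨U, hO, hcov, hdiam⟩ :=
    exists_optimal_cover (coverSet_dyn_nonempty hT m hε F)
  -- shrink it
  obtain ⟨V, hVcov, hVo, hVcl⟩ := exists_subset_iUnion_closure_subset hFc hO
    (fun x _ => Set.toFinite _) hcov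
  -- step (i) : a `δ₀` such that `K δ₀ ⊆ ⋃ V`
  obtain ⟨δ₀, hδ₀, hδ₀e⟩ := exists_pos_disjoint
    ((isOpen_iUnion fun i => hVo i).isClosed_compl.isCompact) K hKc hKmono
    (by
      rw [hKF]
      refine Set.eq_empty_of_subset_empty fun x hx => (hx.1 (hVcov hx.2)).elim)
  -- step (ii) : for each `i`, a `δᵢ` controlling the diameter
  have step2 : ∀ i, ∃ δ : ℝ, 0 < δ ∧
      ((closure (V i) ×ˢ closure (V i)) ∩ {p : X × X | ε ≤ ρ p.1 p.2}) ∩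
        (K δ ×ˢ K δ) = ∅ := by
    intro i
    refine exists_pos_disjoint ?_ (fun δ => K δ ×ˢ K δ)
      (fun δ => (hKc δ).prod (hKc δ)) (fun δ δ' h => Set.prod_mono (hKmono h) (hKmono h)) ?_
    · exact (((isClosed_closure.prod isClosed_closure).inter
        (isClosed_le continuous_const hcρ))).isCompact
    · refine Set.eq_empty_of_subset_empty ?_
      rintro ⟨x, x'⟩ ⟨⟨⟨hx1, hx2⟩, hx3⟩, hx4⟩
      have hxF : x ∈ F ∧ x' ∈ F := by
        rw [← hKF]
        constructor
        · exact Set.mem_iInter.2 fun δ => (Set.mem_iInter.1 hx4 δ).1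
        · exact Set.mem_iInter.2 fun δ => (Set.mem_iInter.1 hx4 δ).2
      have h1 : x ∈ U i ∩ F := ⟨hVcl i hx1, hxF.1⟩
      have h2 : x' ∈ U i ∩ F := ⟨hVcl i hx2, hxF.2⟩
      have := dist_lt_of_setDiam_lt hε h1 h2 (hdiam i)
      exact absurd hx3 (by simp only [Set.mem_setOf_eq]; linarith)
  choose δi hδi hδie using step2
  -- the final δ
  set t : Finset ℝ := insert δ₀ (Finset.univ.image δi) with hts
  have htne : t.Nonempty := Finset.insert_nonempty _ _
  set δ : ℝ := t.inf' htne id with hδdef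
  have hδpos : 0 < δ := by
    refine (Finset.lt_inf'_iff htne).2 fun b hb => ?_
    rw [hts] at hb
    rcases Finset.mem_insert.1 hb with h | h
    · exact h ▸ hδ₀
    · obtain ⟨i, -, rfl⟩ := Finset.mem_image.1 h
      exact hδi i
  have hδle₀ : δ ≤ δ₀ := Finset.inf'_le id (by simp [hts])
  have hδlei : ∀ i, δ ≤ δi i := fun i => Finset.inf'_le id (by simp [hts])
  refine ⟨δ, hδpos, ?_⟩
  have hKsub : K δ ⊆ ⋃ i, V i := by
    intro x hx
    by_contra hmem
    exact Set.eq_empty_iff_forall_notMem.1 hδ₀e x ⟨hmem, hKmono hδle₀ hx⟩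
  have : coverNum ρ (K δ) ε ≤ Fintype.card (Fin (coverNum ρ F ε)) := by
    refine coverNum_le_card V hVo hKsub fun i => ?_
    set Q : Set X := closure (V i) ∩ K δ with hQ
    have hQc : IsCompact Q := (isClosed_closure.inter (hKc δ)).isCompact
    rcases Q.eq_empty_or_nonempty with hQe | hQne
    · have : V i ∩ K δ = ∅ := by
        refine Set.eq_empty_of_subset_empty ?_
        rw [← hQe]
        exact Set.inter_subset_inter_left _ subset_closure
      rw [this, setDiam_empty]
      exact ENNReal.ofReal_pos.2 hε
    · obtain ⟨p, hp, hmax⟩ := (hQc.prod hQc).exists_isMaxOn (hQne.prod hQne)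
        (hcρ.continuousOn)
      have hrlt : ρ p.1 p.2 < ε := by
        by_contra hge
        push_neg at hge
        refine Set.eq_empty_iff_forall_notMem.1 (hδie i) p ?_
        exact ⟨⟨⟨hp.1.1, hp.2.1⟩, hge⟩, ⟨hKmono (hδlei i) hp.1.2, hKmono (hδlei i) hp.2.2⟩⟩
      have hb : ∀ x ∈ V i ∩ K δ, ∀ x' ∈ V i ∩ K δ, ρ x x' ≤ ρ p.1 p.2 := by
        rintro x ⟨hx1, hx2⟩ x' ⟨hx1', hx2'⟩
        exact hmax (Set.mk_mem_prod ⟨subset_closure hx1, hx2⟩ ⟨subset_closure hx1', hx2'⟩)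
      refine lt_of_le_of_lt (setDiam_le hb) ?_
      exact (ENNReal.ofReal_lt_ofReal_iff hε).2 hrlt
  rw [Fintype.card_fin] at this; exact this

lemma exists_delta_uniform (hT : Continuous T) (hS : Continuous S) (hπ : Continuous π)
    {m : ℕ} (hm : 1 ≤ m) {ε : ℝ} (hε : 0 < ε) :
    ∃ δ : ℝ, 0 < δ ∧ ∀ y : Y, ∃ y' : Y,
      coverNum (dynDist T (fun p q => dist p q) m)
        (π ⁻¹' {z | dynDist S (fun p q => dist p q) m z y ≤ δ}) ε ≤
      coverNum (dynDist T (fun p q => dist p q) m) (π ⁻¹' {y'}) ε := by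
  classical
  rcases isEmpty_or_nonempty Y with hY | hY
  · exact ⟨1, one_pos, fun y => (IsEmpty.false y).elim⟩
  choose δf hδf hδcov using fun y : Y => exists_delta_point hT hS hπ hm hε y
  set W : Y → Set Y := fun y => {y' | dynDist S (fun p q => dist p q) m y' y < δf y / 2}
    with hW
  have hWo : ∀ y, IsOpen (W y) := fun y =>
    isOpen_lt ((continuous_dynDist hS m).comp (continuous_id.prodMk continuous_const))
      continuous_const
  have hWmem : ∀ y, y ∈ W y := fun y => by
    simp only [hW, Set.mem_setOf_eq, dynDist_self]
    linarith [hδf y]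
  obtain ⟨t, ht⟩ := isCompact_univ.elim_finite_subcover W hWo
    (fun y _ => Set.mem_iUnion.2 ⟨y, hWmem y⟩)
  have htne : t.Nonempty := by
    rcases t.eq_empty_or_nonempty with h | h
    · exfalso
      obtain ⟨y⟩ := hY
      have := ht (Set.mem_univ y)
      subst h
      simpa using this
    · exact h
  refine ⟨t.inf' htne (fun y => δf y / 2), ?_, ?_⟩
  · exact (Finset.lt_inf'_iff htne).2 fun y _ => by linarith [hδf y]
  · intro y
    have := ht (Set.mem_univ y)
    simp only [Set.mem_iUnion] at this
    obtain ⟨y₀, hy₀t, hy₀⟩ := this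
    refine ⟨y₀, ?_⟩
    have hsub : {z | dynDist S (fun p q => dist p q) m z y ≤ t.inf' htne (fun y => δf y / 2)}
        ⊆ {z | dynDist S (fun p q => dist p q) m z y₀ ≤ δf y₀} := by
      intro z hz
      simp only [Set.mem_setOf_eq] at hz ⊢
      have h1 : dynDist S (fun p q => dist p q) m z y ≤ δf y₀ / 2 :=
        hz.trans (Finset.inf'_le _ hy₀t)
      have h2 : dynDist S (fun p q => dist p q) m y y₀ < δf y₀ / 2 := hy₀
      have := dynDist_triangle S m z y y₀
      linarith
    refine le_trans (coverNum_mono (Set.preimage_mono hsub)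
      (coverSet_dyn_nonempty hT m hε _)) (hδcov y₀)

end uniform

end CMMD

namespace CMMD

section block
variable {X Y : Type*} [MetricSpace X] [CompactSpace X] [MetricSpace Y]
variable {T : X → X} {S : Y → Y} {π : X → Y}

lemma block_bound (hT : Continuous T) (hπeq : ∀ s (x : X), π (T^[s] x) = S^[s] (π x))
    {ε : ℝ} (hε : 0 < ε) {m N : ℕ} (hm : 1 ≤ m) (hmN : m ≤ N) (δ : ℝ) (y : Y) :
    coverNum (dynDist T (fun p q => dist p q) N)
        (π ⁻¹' {z | dynDist S (fun p q => dist p q) N z y ≤ δ}) ε ≤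
      ∏ j : Fin (N / m + 1), coverNum (dynDist T (fun p q => dist p q) m)
        (π ⁻¹' {z | dynDist S (fun p q => dist p q) m z
            (S^[min (j.1 * m) (N - m)] y) ≤ δ}) ε := by
  have hs : ∀ j : Fin (N / m + 1), min (j.1 * m) (N - m) + m ≤ N := fun j => by
    have := Nat.min_le_right (j.1 * m) (N - m); omega
  refine coverNum_prod_le hε (fun j : Fin (N / m + 1) => T^[min (j.1 * m) (N - m)])
    (fun j => hT.iterate _) _ _ _ ?_ ?_ (fun j => coverSet_dyn_nonempty hT m hε _)
  · intro j x hx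
    simp only [Set.mem_preimage, Set.mem_setOf_eq] at hx ⊢
    rw [hπeq]
    exact le_trans (dynDist_iterate_le S (hs j) (π x) y) hx
  · intro x x'
    have hN1 : 0 < N := lt_of_lt_of_le hm hmN
    have : Nonempty (Fin N) := ⟨⟨0, hN1⟩⟩
    obtain ⟨n, hn⟩ := exists_eq_ciSup_of_finite
      (f := fun n : Fin N => dist (T^[(n : ℕ)] x) (T^[(n : ℕ)] x'))
    have hjlt : (n : ℕ) / m < N / m + 1 :=
      Nat.lt_succ_of_le (Nat.div_le_div_right (le_of_lt n.2))
    refine ⟨⟨(n : ℕ) / m, hjlt⟩, ?_⟩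
    set s : ℕ := min ((n : ℕ) / m * m) (N - m) with hsdef
    have hsn : s ≤ (n : ℕ) := le_trans (Nat.min_le_left _ _) (Nat.div_mul_le_self _ _)
    have hns : (n : ℕ) < s + m := by
      have h1 : (n : ℕ) < ((n : ℕ) / m + 1) * m := by
        have hdm := Nat.div_add_mod (n : ℕ) m
        have hml := Nat.mod_lt (n : ℕ) (show 0 < m by omega)
        calc (n : ℕ) = m * ((n : ℕ) / m) + (n : ℕ) % m := hdm.symm
          _ < m * ((n : ℕ) / m) + m := by omega
          _ = ((n : ℕ) / m + 1) * m := by ring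
      have h2 : (n : ℕ) < N := n.2
      rw [add_mul, one_mul] at h1
      rcases min_cases ((n : ℕ) / m * m) (N - m) with ⟨he, -⟩ | ⟨he, -⟩ <;> omega
    have h0 : dynDist T (fun p q => dist p q) N x x' =
        dist (T^[(n : ℕ)] x) (T^[(n : ℕ)] x') := by
      rw [dynDist]; exact hn.symm
    rw [h0]
    have h2 : dist (T^[(n : ℕ)] x) (T^[(n : ℕ)] x') =
        dist (T^[(n : ℕ) - s] (T^[s] x)) (T^[(n : ℕ) - s] (T^[s] x')) := by
      rw [← Function.iterate_add_apply, ← Function.iterate_add_apply, Nat.sub_add_cancel hsn]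
    rw [h2]
    exact le_dynDist T (show (n : ℕ) - s < m by omega) _ _

end block

end CMMD

/-- `sup_y log #(π⁻¹(B_δ(y,d'_N)), d_N, ε)`, as an auxiliary abbreviation. -/
def ballLogCover {X Y : Type*} [MetricSpace X] [MetricSpace Y] (T : X → X) (S : Y → Y)
    (π : X → Y) (ε δ : ℝ) (N : ℕ) : EReal :=
  ⨆ y : Y, ((Real.log (coverNum (dynDist T (fun p q => dist p q) N)
      (π ⁻¹' {z : Y | dynDist S (fun p q => dist p q) N z y ≤ δ}) ε) : ℝ) : EReal)


open CMMD in
/-- Formula for the lower conditional metric mean dimension in terms of preimages of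
closed dynamical balls `B_δ(y, d'_N)`. -/
theorem condMetricMeanDim_eq_ball_formula (X Y : Type*) [MetricSpace X] [CompactSpace X]
    [MetricSpace Y] [CompactSpace Y] (T : X ≃ₜ X) (S : Y ≃ₜ Y) (π : X → Y)
    (hπ : Continuous π) (hequiv : ∀ x, π (T x) = S (π x)) :
    condMetricMeanDim T (fun p q => dist p q) π =
      Filter.liminf (fun ε : ℝ =>
        Filter.limsup (fun δ : ℝ =>
          Filter.limsup (fun Nn : ℕ =>
            (⨆ y : Y, ((Real.log (coverNum (dynDist T (fun p q => dist p q) Nn)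
                (π ⁻¹' {z : Y | dynDist S (fun p q => dist p q) Nn z y ≤ δ}) ε) : ℝ) : EReal)) /
              ((Nn : EReal) * ((Real.log (1 / ε) : ℝ) : EReal))) Filter.atTop)
          (𝓝[>] 0)) (𝓝[>] 0) := by
  have hT : Continuous (⇑T) := T.continuous
  have hS : Continuous (⇑S) := S.continuous
  have hπeq : ∀ s (x : X), π ((⇑T)^[s] x) = (⇑S)^[s] (π x) := by
    intro s
    induction s with
    | zero => intro x; simp
    | succ n ih =>
      intro x
      rw [Function.iterate_succ_apply', Function.iterate_succ_apply', hequiv, ih]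
  show Filter.liminf (fun ε : ℝ => Filter.limsup (fun Nn : ℕ =>
      fiberLogCover (⇑T) (fun p q => dist p q) π ε Nn /
        ((Nn : EReal) * ((Real.log (1 / ε) : ℝ) : EReal))) Filter.atTop) (𝓝[>] 0) =
    Filter.liminf (fun ε : ℝ => Filter.limsup (fun δ : ℝ => Filter.limsup (fun Nn : ℕ =>
      ballLogCover (⇑T) (⇑S) π ε δ Nn /
        ((Nn : EReal) * ((Real.log (1 / ε) : ℝ) : EReal))) Filter.atTop) (𝓝[>] 0)) (𝓝[>] 0)
  refine Filter.liminf_congr ?_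
  filter_upwards [Ioo_mem_nhdsGT one_pos] with ε hεm
  obtain ⟨hε0, hε1⟩ := hεm
  have hc : 0 < Real.log (1 / ε) := Real.log_pos (one_lt_one_div hε0 hε1)
  have hqeq : ∀ N : ℕ, (N : EReal) * ((Real.log (1 / ε) : ℝ) : EReal) =
      (((N : ℝ) * Real.log (1 / ε) : ℝ) : EReal) := fun N => by
    rw [EReal.coe_mul, EReal.coe_coe_eq_natCast]
  have hq0 : ∀ N : ℕ, (0 : EReal) ≤ (N : EReal) * ((Real.log (1 / ε) : ℝ) : EReal) :=
    fun N => by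
      rw [hqeq]
      exact EReal.coe_nonneg.2 (by positivity)
  have hlogmono : ∀ {n n' : ℕ}, n ≤ n' → Real.log n ≤ Real.log n' := by
    intro n n' h
    rcases Nat.eq_zero_or_pos n with rfl | h0
    · simpa using Real.log_natCast_nonneg n'
    · exact Real.log_le_log (by exact_mod_cast h0) (by exact_mod_cast h)
  have hgmono : ∀ N : ℕ, ∀ {δ δ' : ℝ}, δ ≤ δ' →
      ballLogCover (⇑T) (⇑S) π ε δ N ≤ ballLogCover (⇑T) (⇑S) π ε δ' N := by
    intro N δ δ' h
    refine iSup_le fun y => le_iSup_of_le y (EReal.coe_le_coe_iff.2 (hlogmono ?_))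
    exact coverNum_mono (Set.preimage_mono fun z hz => le_trans hz h)
      (coverSet_dyn_nonempty hT N hε0 _)
  refine le_antisymm ?_ ?_
  · -- easy direction : `lmdimm ≤` ball formula
    have hfreq : ∃ᶠ δ : ℝ in 𝓝[>] (0:ℝ), (0:ℝ) < δ :=
      Filter.Eventually.frequently (eventually_mem_nhdsWithin)
    refine le_limsup_of_frequently_le (hfreq.mono ?_)
    intro δ hδ
    refine Filter.limsup_le_limsup (Filter.Eventually.of_forall fun N => ?_)
    refine EReal.div_le_div_right_of_nonneg (hq0 N) ?_
    refine iSup_le fun y => le_iSup_of_le y (EReal.coe_le_coe_iff.2 (hlogmono ?_))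
    refine coverNum_mono (Set.preimage_mono ?_) (coverSet_dyn_nonempty hT N hε0 _)
    intro z hz
    rcases hz with rfl
    simp only [Set.mem_setOf_eq, dynDist_self]
    exact hδ.le
  · -- hard direction
    rcases isEmpty_or_nonempty Y with hY | hY
    · refine le_trans (Filter.limsup_le_of_le (by isBoundedDefault) ?_) bot_le
      refine Filter.Eventually.of_forall fun δ => ?_
      refine Filter.limsup_le_of_le (by isBoundedDefault) ?_
      filter_upwards [Filter.eventually_ge_atTop 1] with N hN
      have h1 : ballLogCover (⇑T) (⇑S) π ε δ N = ⊥ := iSup_of_empty _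
      rw [h1, hqeq N,
        EReal.bot_div_of_pos_ne_top (EReal.coe_pos.2 (by positivity)) (EReal.coe_ne_top _)]
    · obtain ⟨y₀⟩ := hY
      have ha0 : ∀ N, (0 : EReal) ≤ fiberLogCover (⇑T) (fun p q => dist p q) π ε N :=
        fun N => le_iSup_of_le y₀ (EReal.coe_nonneg.2 (Real.log_natCast_nonneg _))
      have key : ∀ m : ℕ, 1 ≤ m →
          Filter.limsup (fun δ : ℝ => Filter.limsup (fun N : ℕ =>
              ballLogCover (⇑T) (⇑S) π ε δ N /
                ((N : EReal) * ((Real.log (1 / ε) : ℝ) : EReal))) Filter.atTop) (𝓝[>] (0:ℝ)) ≤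
            fiberLogCover (⇑T) (fun p q => dist p q) π ε m /
              ((m : EReal) * ((Real.log (1 / ε) : ℝ) : EReal)) := by
        intro m hm
        obtain ⟨δ, hδpos, hδcov⟩ := exists_delta_uniform hT hS hπ hm hε0
        have h1 : Filter.limsup (fun δ' : ℝ => Filter.limsup (fun N : ℕ =>
            ballLogCover (⇑T) (⇑S) π ε δ' N /
              ((N : EReal) * ((Real.log (1 / ε) : ℝ) : EReal))) Filter.atTop) (𝓝[>] (0:ℝ)) ≤
            Filter.limsup (fun N : ℕ => ballLogCover (⇑T) (⇑S) π ε δ N /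
              ((N : EReal) * ((Real.log (1 / ε) : ℝ) : EReal))) Filter.atTop := by
          refine Filter.limsup_le_of_le (by isBoundedDefault) ?_
          filter_upwards [Ioo_mem_nhdsGT hδpos] with δ' hδ'
          refine Filter.limsup_le_limsup (Filter.Eventually.of_forall fun N => ?_)
          exact EReal.div_le_div_right_of_nonneg (hq0 N) (hgmono N hδ'.2.le)
        refine h1.trans ?_
        by_cases htop : fiberLogCover (⇑T) (fun p q => dist p q) π ε m = ⊤
        · rw [htop, hqeq m,
            EReal.top_div_of_pos_ne_top (EReal.coe_pos.2 (by positivity)) (EReal.coe_ne_top _)]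
          exact le_top
        · have hbot : fiberLogCover (⇑T) (fun p q => dist p q) π ε m ≠ ⊥ := fun h => by
            have h2 := ha0 m
            rw [h] at h2
            exact absurd h2 (by simp)
          set r : ℝ := (fiberLogCover (⇑T) (fun p q => dist p q) π ε m).toReal with hrdef
          have har : fiberLogCover (⇑T) (fun p q => dist p q) π ε m = (r : EReal) :=
            (EReal.coe_toReal htop hbot).symm
          have hr0 : 0 ≤ r := by
            have h2 := ha0 m
            rw [har] at h2
            exact EReal.coe_nonneg.1 h2
          have keyN : ∀ N : ℕ, m ≤ N → ballLogCover (⇑T) (⇑S) π ε δ N ≤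
              ((((N / m + 1 : ℕ) : ℝ) * r : ℝ) : EReal) := by
            intro N hmN
            refine iSup_le fun y => ?_
            have hblock := block_bound hT hπeq hε0 hm hmN δ y
            have hQr : ∀ j : Fin (N / m + 1),
                Real.log (coverNum (dynDist (⇑T) (fun p q => dist p q) m)
                  (π ⁻¹' {z | dynDist (⇑S) (fun p q => dist p q) m z
                    ((⇑S)^[min (j.1 * m) (N - m)] y) ≤ δ}) ε) ≤ r := by
              intro j
              obtain ⟨y', hy'⟩ := hδcov ((⇑S)^[min (j.1 * m) (N - m)] y)
              have h2 : ((Real.log (coverNum (dynDist (⇑T) (fun p q => dist p q) m)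
                  (π ⁻¹' {y'}) ε) : ℝ) : EReal) ≤
                  fiberLogCover (⇑T) (fun p q => dist p q) π ε m :=
                le_iSup (fun y : Y => ((Real.log (coverNum
                  (dynDist (⇑T) (fun p q => dist p q) m) (π ⁻¹' {y}) ε) : ℝ) : EReal)) y'
              rw [har] at h2
              exact le_trans (hlogmono hy') (EReal.coe_le_coe_iff.1 h2)
            refine EReal.coe_le_coe_iff.2 ?_
            refine le_trans (hlogmono hblock) ?_
            refine le_trans ?_ (le_trans (Finset.sum_le_card_nsmul Finset.univ _ r
              fun j _ => hQr j) ?_)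
            · rw [Nat.cast_prod]
              by_cases hz : ∀ j ∈ (Finset.univ : Finset (Fin (N / m + 1))),
                  ((coverNum (dynDist (⇑T) (fun p q => dist p q) m)
                    (π ⁻¹' {z | dynDist (⇑S) (fun p q => dist p q) m z
                      ((⇑S)^[min (j.1 * m) (N - m)] y) ≤ δ}) ε : ℝ)) ≠ 0
              · rw [Real.log_prod hz]
              · push_neg at hz
                obtain ⟨j, -, hj⟩ := hz
                rw [Finset.prod_eq_zero (Finset.mem_univ j) hj, Real.log_zero]
                exact Finset.sum_nonneg fun i _ => Real.log_natCast_nonneg _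
            · simp [nsmul_eq_mul]
          have hb : Filter.Tendsto (fun N : ℕ =>
              (((N / m + 1 : ℕ) : ℝ) * r) / ((N : ℝ) * Real.log (1 / ε))) Filter.atTop
              (𝓝 ((1 / (m : ℝ)) * (r / Real.log (1 / ε)))) := by
            have hb' : (fun N : ℕ => (((N / m + 1 : ℕ) : ℝ) * r) / ((N : ℝ) * Real.log (1 / ε)))
                = fun N : ℕ => (((N / m + 1 : ℕ) : ℝ) / (N : ℝ)) * (r / Real.log (1 / ε)) := by
              funext N
              rw [div_mul_div_comm]
            rw [hb']
            refine Filter.Tendsto.mul_const _ ?_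
            have hup : Filter.Tendsto (fun N : ℕ => 1 / (m : ℝ) + 1 / (N : ℝ))
                Filter.atTop (𝓝 (1 / (m : ℝ))) := by
              have h3 := tendsto_one_div_atTop_nhds_zero_nat (𝕜 := ℝ)
              simpa using (tendsto_const_nhds.add h3)
            refine tendsto_of_tendsto_of_tendsto_of_le_of_le' tendsto_const_nhds hup ?_ ?_
            all_goals filter_upwards [Filter.eventually_ge_atTop 1] with N hN
            all_goals have hNpos : (0 : ℝ) < (N : ℝ) := by exact_mod_cast hN
            all_goals have hm0 : (0 : ℝ) < (m : ℝ) := by exact_mod_cast hm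
            · have hfl : ((N : ℝ) / (m : ℝ)) < ((N / m : ℕ) : ℝ) + 1 := by
                have h4 : (N / m : ℕ) = ⌊((N : ℝ) / (m : ℝ))⌋₊ := by
                  rw [Nat.floor_div_natCast, Nat.floor_natCast]
                rw [h4]
                exact Nat.lt_floor_add_one _
              have h5 : ((N : ℝ) / (m : ℝ)) ≤ ((N / m + 1 : ℕ) : ℝ) := by
                push_cast
                linarith
              rw [le_div_iff₀ hNpos]
              calc 1 / (m : ℝ) * (N : ℝ) = (N : ℝ) / (m : ℝ) := by ring
                _ ≤ ((N / m + 1 : ℕ) : ℝ) := h5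
            · have h5 : ((N / m + 1 : ℕ) : ℝ) ≤ (N : ℝ) / (m : ℝ) + 1 := by
                push_cast
                have h6 := Nat.cast_div_le (α := ℝ) (m := N) (n := m)
                linarith
              rw [div_le_iff₀ hNpos]
              calc ((N / m + 1 : ℕ) : ℝ) ≤ (N : ℝ) / (m : ℝ) + 1 := h5
                _ = (1 / (m : ℝ) + 1 / (N : ℝ)) * (N : ℝ) := by
                    field_simp
          have hcoe : Filter.Tendsto (fun N : ℕ =>
              (((((N / m + 1 : ℕ) : ℝ) * r) / ((N : ℝ) * Real.log (1 / ε)) : ℝ) : EReal))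
              Filter.atTop (𝓝 (((1 / (m : ℝ)) * (r / Real.log (1 / ε)) : ℝ) : EReal)) :=
            EReal.tendsto_coe.2 hb
          have hlimb := hcoe.limsup_eq
          have h5 : Filter.limsup (fun N : ℕ => ballLogCover (⇑T) (⇑S) π ε δ N /
              ((N : EReal) * ((Real.log (1 / ε) : ℝ) : EReal))) Filter.atTop ≤
              Filter.limsup (fun N : ℕ =>
                (((((N / m + 1 : ℕ) : ℝ) * r) / ((N : ℝ) * Real.log (1 / ε)) : ℝ) : EReal))
                Filter.atTop := by
            refine Filter.limsup_le_limsup ?_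
            filter_upwards [Filter.eventually_ge_atTop m] with N hmN
            rw [hqeq N, EReal.coe_div]
            exact EReal.div_le_div_right_of_nonneg
              (by rw [← hqeq]; exact hq0 N) (keyN N hmN)
          refine h5.trans ?_
          rw [hlimb, har, hqeq m, ← EReal.coe_div, EReal.coe_eq_coe_iff.2 ?_]
          rw [div_mul_div_comm, one_mul]
      refine le_trans ?_ Filter.liminf_le_limsup
      refine Filter.le_liminf_of_le (by isBoundedDefault) ?_
      filter_upwards [Filter.eventually_ge_atTop 1] with N hN
      exact key N hN
end
end

section
/- Let δ > 0 and let P be a finite simplicial complex of dimension n. For any simplicial map f : P → ℝ^{n+1} there exists a simplicial map g : P → ℝ^{n+1} such that |f(x) − g(x)| < δ for all x ∈ P, and for any pairwise disjoint simplices Δ_1, …, Δ_{n+2} of P one has g(Δ_1) ∩ ⋯ ∩ g(Δ_{n+2}) = ∅. -/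
open Filter Topology Pointwise ENNReal
open scoped ENat

noncomputable section

section GPAuxiliary
open Finset

open Finset

variable {ι : Type*}

lemma GP.sum_smul_add_const {M : Type*} [AddCommGroup M] [Module ℝ M] (s : Finset ι) (w : ι → ℝ)
    (hw : ∑ v ∈ s, w v = 1) (q : ι → M) (a : M) :
    ∑ v ∈ s, w v • (q v + a) = (∑ v ∈ s, w v • q v) + a := by
  simp only [smul_add, Finset.sum_add_distrib, ← Finset.sum_smul, hw, one_smul]

lemma GP.sum_smul_eq_base {M : Type*} [AddCommGroup M] [Module ℝ M] [DecidableEq ι]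
    (s : Finset ι) {b : ι} (hb : b ∈ s) (w : ι → ℝ) (hw : ∑ v ∈ s, w v = 1) (q : ι → M) :
    ∑ v ∈ s, w v • q v = q b + ∑ v ∈ s.erase b, w v • (q v - q b) := by
  have h1 : ∑ v ∈ s.erase b, w v = 1 - w b := by
    have := Finset.add_sum_erase s w hb
    linarith
  have h2 : w b • q b + ∑ v ∈ s.erase b, w v • q v = ∑ v ∈ s, w v • q v :=
    Finset.add_sum_erase s (fun v => w v • q v) hb
  rw [← h2]
  simp only [smul_sub, Finset.sum_sub_distrib, ← Finset.sum_smul, h1, sub_smul, one_smul]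
  abel

lemma GP.lemA [DecidableEq ι] (n : ℕ) (S : Fin (n + 2) → Finset ι)
    (hne : ∀ i, (S i).Nonempty) (hcard : ∀ i, (S i).card ≤ n + 1)
    (q : ι → Fin (n + 1) → ℝ) :
    interior {t : Fin (n + 2) → Fin (n + 1) → ℝ | ∃ x : Fin (n + 1) → ℝ, ∀ i, ∃ w : ι → ℝ,
      (∀ v ∈ S i, 0 ≤ w v) ∧ (∑ v ∈ S i, w v) = 1 ∧
      (∑ v ∈ S i, w v • (q v + t i)) = x} = ∅ := by
  by_contra hcon
  obtain ⟨t₀, ht₀⟩ := Set.nonempty_iff_ne_empty.mpr hcon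
  obtain ⟨ρ, hρ, hball⟩ := Metric.mem_nhds_iff.mp (mem_interior_iff_mem_nhds.mp ht₀)
  set b : Fin (n + 2) → ι := fun i => (hne i).choose with hbdef
  have hb : ∀ i, b i ∈ S i := fun i => (hne i).choose_spec
  set Z : ι → (Fin (n + 1) → Fin (n + 1) → ℝ) := fun v _ => q v - q (b 0) with hZdef
  set Y : Fin (n + 1) → ι → (Fin (n + 1) → Fin (n + 1) → ℝ) :=
    fun i v => Pi.single i (q v - q (b i.succ)) with hYdef
  set G : Finset (Fin (n + 1) → Fin (n + 1) → ℝ) :=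
    ((S 0).erase (b 0)).image Z ∪
      Finset.univ.biUnion (fun i : Fin (n + 1) => ((S i.succ).erase (b i.succ)).image (Y i))
    with hGdef
  set U : Submodule ℝ (Fin (n + 1) → Fin (n + 1) → ℝ) := Submodule.span ℝ (G : Set _) with hUdef
  set c : Fin (n + 1) → Fin (n + 1) → ℝ :=
    fun i => (t₀ 0 - t₀ i.succ) + (q (b 0) - q (b i.succ)) with hcdef
  -- key step
  have key : ∀ s : Fin (n + 1) → Fin (n + 1) → ℝ, ‖s‖ < ρ → s - c ∈ U := by
    intro s hs
    set t : Fin (n + 2) → Fin (n + 1) → ℝ :=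
      Fin.cases (t₀ 0) (fun i => t₀ i.succ + s i) with htdef
    have ht0 : t 0 = t₀ 0 := rfl
    have hts : ∀ i : Fin (n + 1), t i.succ = t₀ i.succ + s i := fun i => by
      simp only [htdef, Fin.cases_succ]
    have hmem : t ∈ Metric.ball t₀ ρ := by
      rw [Metric.mem_ball, dist_pi_lt_iff hρ]
      intro j
      rcases Fin.eq_zero_or_eq_succ j with rfl | ⟨i, rfl⟩
      · rw [ht0]; simpa using hρ
      · rw [hts i, dist_eq_norm, add_sub_cancel_left]
        exact lt_of_le_of_lt (norm_le_pi_norm s i) hs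
    obtain ⟨x, hx⟩ := hball hmem
    choose w hw0 hw1 hw2 using hx
    have hrep : s - c = (∑ v ∈ (S 0).erase (b 0), w 0 v • Z v)
        - ∑ i : Fin (n + 1), ∑ v ∈ (S i.succ).erase (b i.succ), w i.succ v • Y i v := by
      funext j
      have hA : (∑ v ∈ (S 0).erase (b 0), w 0 v • Z v) j
          = ∑ v ∈ (S 0).erase (b 0), w 0 v • (q v - q (b 0)) := by
        rw [Finset.sum_apply]
        exact Finset.sum_congr rfl fun v _ => rfl
      have hB : (∑ i : Fin (n + 1), ∑ v ∈ (S i.succ).erase (b i.succ), w i.succ v • Y i v) j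
          = ∑ v ∈ (S j.succ).erase (b j.succ), w j.succ v • (q v - q (b j.succ)) := by
        rw [Finset.sum_apply]
        rw [Finset.sum_eq_single j]
        · rw [Finset.sum_apply]
          refine Finset.sum_congr rfl fun v _ => ?_
          rw [Pi.smul_apply, hYdef]
          simp only [Pi.single_eq_same]
        · intro i _ hij
          rw [Finset.sum_apply]
          refine Finset.sum_eq_zero fun v _ => ?_
          rw [Pi.smul_apply, hYdef]
          simp only
          rw [Pi.single_eq_of_ne (Ne.symm (fun h => hij (by exact h ▸ rfl))) ]
          · exact smul_zero _
        · intro hj; exact absurd (Finset.mem_univ j) hj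
      have h := (hw2 j.succ).trans (hw2 0).symm
      rw [GP.sum_smul_add_const _ _ (hw1 j.succ), GP.sum_smul_add_const _ _ (hw1 0),
        ht0, hts j, GP.sum_smul_eq_base (S j.succ) (hb j.succ) _ (hw1 j.succ) q,
        GP.sum_smul_eq_base (S 0) (hb 0) _ (hw1 0) q] at h
      rw [Pi.sub_apply, Pi.sub_apply, hA, hB]
      set A := ∑ v ∈ (S 0).erase (b 0), w 0 v • (q v - q (b 0)) with hAs
      set B := ∑ v ∈ (S j.succ).erase (b j.succ), w j.succ v • (q v - q (b j.succ)) with hBs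
      -- h : (q (b j.succ) + B) + (t₀ j.succ + s j) = (q (b 0) + A) + t₀ 0
      have h2 : s j = ((q (b 0) + A) + t₀ 0) - ((q (b j.succ) + B) + t₀ j.succ) := by
        rw [← h]; abel
      rw [h2, hcdef]
      funext k
      simp only [Pi.add_apply, Pi.sub_apply]
      ring
    have hX1 : (∑ v ∈ (S 0).erase (b 0), w 0 v • Z v) ∈ U := by
      refine Submodule.sum_mem _ fun v hv => Submodule.smul_mem _ _ (Submodule.subset_span ?_)
      rw [Finset.mem_coe, hGdef]
      exact Finset.mem_union_left _ (Finset.mem_image_of_mem _ hv)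
    have hX2 : (∑ i : Fin (n + 1), ∑ v ∈ (S i.succ).erase (b i.succ), w i.succ v • Y i v) ∈ U := by
      refine Submodule.sum_mem _ fun i _ => Submodule.sum_mem _ fun v hv =>
        Submodule.smul_mem _ _ (Submodule.subset_span ?_)
      rw [Finset.mem_coe, hGdef]
      refine Finset.mem_union_right _ (Finset.mem_biUnion.mpr ⟨i, Finset.mem_univ _, ?_⟩)
      exact Finset.mem_image_of_mem _ hv
    rw [hrep]
    exact Submodule.sub_mem _ hX1 hX2
  -- U is everything
  have hU : ∀ s : Fin (n + 1) → Fin (n + 1) → ℝ, ‖s‖ < ρ → s ∈ U := by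
    intro s hs
    have h1 := key s hs
    have h2 := key 0 (by simpa using hρ)
    have h3 : s = (s - c) - (0 - c) := by abel
    rw [h3]
    exact Submodule.sub_mem _ h1 h2
  have hUtop : U = ⊤ := by
    rw [Submodule.eq_top_iff']
    intro x
    rcases eq_or_ne x 0 with rfl | hx
    · exact Submodule.zero_mem _
    · have hxn : (0 : ℝ) < ‖x‖ := norm_pos_iff.mpr hx
      have h1 : ‖(ρ / 2 / ‖x‖) • x‖ < ρ := by
        rw [norm_smul, Real.norm_eq_abs, abs_of_pos (by positivity), div_mul_cancel₀]
        · linarith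
        · exact ne_of_gt hxn
      have h2 := hU _ h1
      have h3 : x = (‖x‖ / (ρ / 2)) • ((ρ / 2 / ‖x‖) • x) := by
        have hone : (‖x‖ / (ρ / 2)) * (ρ / 2 / ‖x‖) = 1 := by
          field_simp
        rw [smul_smul, hone, one_smul]
      rw [h3]
      exact Submodule.smul_mem _ _ h2
  -- rank contradiction
  have hGcard : G.card ≤ n + (n + 1) * n := by
    refine (Finset.card_union_le _ _).trans ?_
    have h1 : (((S 0).erase (b 0)).image Z).card ≤ n := by
      refine Finset.card_image_le.trans ?_
      rw [Finset.card_erase_of_mem (hb 0)]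
      have := hcard 0
      omega
    have h2 : (Finset.univ.biUnion
        (fun i : Fin (n + 1) => ((S i.succ).erase (b i.succ)).image (Y i))).card
        ≤ (n + 1) * n := by
      refine Finset.card_biUnion_le.trans ?_
      calc ∑ i : Fin (n + 1), (((S i.succ).erase (b i.succ)).image (Y i)).card
          ≤ ∑ _i : Fin (n + 1), n := by
            refine Finset.sum_le_sum fun i _ => ?_
            refine Finset.card_image_le.trans ?_
            rw [Finset.card_erase_of_mem (hb i.succ)]
            have := hcard i.succ
            omega
        _ = (n + 1) * n := by simp [Finset.sum_const, mul_comm]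
    omega
  have hfr : Module.finrank ℝ (Fin (n + 1) → Fin (n + 1) → ℝ) = (n + 1) * (n + 1) := by
    rw [Module.finrank_pi_fintype]
    simp [Module.finrank_pi]
  have hUle : Module.finrank ℝ U ≤ G.card := by
    have := finrank_span_finset_le_card (R := ℝ) G
    rwa [Set.finrank] at this
  rw [hUtop] at hUle
  rw [finrank_top] at hUle
  rw [hfr] at hUle
  have : (n + 1) * (n + 1) = n + (n + 1) * n + 1 := by ring
  omega


lemma GP.unique_weights {E : Type*} [AddCommGroup E] [Module ℝ E] {s : Finset E}
    (hind : AffineIndependent ℝ ((↑) : ↥s → E)) (w₁ w₂ : E → ℝ)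
    (h1 : ∑ v ∈ s, w₁ v = 1) (h2 : ∑ v ∈ s, w₂ v = 1)
    (heq : ∑ v ∈ s, w₁ v • v = ∑ v ∈ s, w₂ v • v) : ∀ v ∈ s, w₁ v = w₂ v := by
  have hs1 : ∑ v : ↥s, w₁ ↑v = 1 := by
    rw [Finset.sum_coe_sort s w₁]; exact h1
  have hs2 : ∑ v : ↥s, w₂ ↑v = 1 := by
    rw [Finset.sum_coe_sort s w₂]; exact h2
  have hcomb : Finset.univ.affineCombination ℝ ((↑) : ↥s → E) (fun v => w₁ ↑v)
      = Finset.univ.affineCombination ℝ ((↑) : ↥s → E) (fun v => w₂ ↑v) := by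
    rw [Finset.affineCombination_eq_linear_combination _ _ _ hs1,
      Finset.affineCombination_eq_linear_combination _ _ _ hs2]
    rw [Finset.sum_coe_sort s (fun v => w₁ v • v), Finset.sum_coe_sort s (fun v => w₂ v • v)]
    exact heq
  have key := hind.indicator_eq_of_affineCombination_eq Finset.univ Finset.univ
    (fun v => w₁ ↑v) (fun v => w₂ ↑v) hs1 hs2 hcomb
  intro v hv
  have := congrFun key ⟨v, hv⟩
  simpa using this

lemma GP.consist {E F : Type*} [NormedAddCommGroup E] [NormedSpace ℝ E]
    [AddCommGroup F] [Module ℝ F] (K : Geometry.SimplicialComplex ℝ E)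
    {s t : Finset E} (hs : s ∈ K.faces) (ht : t ∈ K.faces)
    (w₁ w₂ : E → ℝ) (h10 : ∀ v ∈ s, 0 ≤ w₁ v) (h11 : ∑ v ∈ s, w₁ v = 1)
    (h20 : ∀ v ∈ t, 0 ≤ w₂ v) (h21 : ∑ v ∈ t, w₂ v = 1)
    (heq : ∑ v ∈ s, w₁ v • v = ∑ v ∈ t, w₂ v • v) (p : E → F) :
    ∑ v ∈ s, w₁ v • p v = ∑ v ∈ t, w₂ v • p v := by
  classical
  set x : E := ∑ v ∈ s, w₁ v • v with hxdef
  have hxs : x ∈ convexHull ℝ (↑s : Set E) := by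
    rw [Finset.convexHull_eq]
    refine ⟨w₁, h10, h11, ?_⟩
    rw [Finset.centerMass_eq_of_sum_1 _ _ h11]
    rfl
  have hxt : x ∈ convexHull ℝ (↑t : Set E) := by
    rw [Finset.convexHull_eq]
    refine ⟨w₂, h20, h21, ?_⟩
    rw [Finset.centerMass_eq_of_sum_1 _ _ h21]
    exact heq.symm
  have hx : x ∈ convexHull ℝ (↑(s ∩ t) : Set E) := by
    have := K.inter_subset_convexHull hs ht ⟨hxs, hxt⟩
    rwa [← Finset.coe_inter] at this
  rw [Finset.convexHull_eq] at hx
  obtain ⟨w₃, h30, h31, hcm⟩ := hx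
  rw [Finset.centerMass_eq_of_sum_1 _ _ h31] at hcm
  simp only [id] at hcm
  set w₃' : E → ℝ := fun v => if v ∈ s ∩ t then w₃ v else 0 with hw3'
  have hsub_s : s ∩ t ⊆ s := Finset.inter_subset_left
  have hsub_t : s ∩ t ⊆ t := Finset.inter_subset_right
  have hzero : ∀ u : Finset E, s ∩ t ⊆ u → ∀ (f : E → F),
      (∑ v ∈ u, w₃' v • f v) = ∑ v ∈ s ∩ t, w₃ v • f v := by
    intro u hu f
    rw [← Finset.sum_subset hu (fun v _ hv => by rw [hw3']; simp [hv])]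
    exact Finset.sum_congr rfl fun v hv => by rw [hw3']; simp [hv]
  have hzeroE : ∀ u : Finset E, s ∩ t ⊆ u →
      (∑ v ∈ u, w₃' v • v) = ∑ v ∈ s ∩ t, w₃ v • v := by
    intro u hu
    rw [← Finset.sum_subset hu (fun v _ hv => by rw [hw3']; simp [hv])]
    exact Finset.sum_congr rfl fun v hv => by rw [hw3']; simp [hv]
  have hzero' : ∀ u : Finset E, s ∩ t ⊆ u → (∑ v ∈ u, w₃' v) = ∑ v ∈ s ∩ t, w₃ v := by
    intro u hu
    rw [← Finset.sum_subset hu (fun v _ hv => by rw [hw3']; simp [hv])]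
    exact Finset.sum_congr rfl fun v hv => by rw [hw3']; simp [hv]
  have hs1' : ∑ v ∈ s, w₃' v = 1 := by rw [hzero' s hsub_s]; exact h31
  have ht1' : ∑ v ∈ t, w₃' v = 1 := by rw [hzero' t hsub_t]; exact h21 ▸ h31
  have hsx : ∑ v ∈ s, w₃' v • v = x := by rw [hzeroE s hsub_s]; exact hcm
  have htx : ∑ v ∈ t, w₃' v • v = x := by rw [hzeroE t hsub_t]; exact hcm
  have hueq_s := GP.unique_weights (K.indep hs) w₁ w₃' h11 hs1' (by rw [hsx])
  have hueq_t := GP.unique_weights (K.indep ht) w₂ w₃' h21 ht1'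
    (by rw [htx, ← heq])
  calc ∑ v ∈ s, w₁ v • p v = ∑ v ∈ s, w₃' v • p v :=
        Finset.sum_congr rfl fun v hv => by rw [hueq_s v hv]
    _ = ∑ v ∈ s ∩ t, w₃ v • p v := hzero s hsub_s p
    _ = ∑ v ∈ t, w₃' v • p v := (hzero t hsub_t p).symm
    _ = ∑ v ∈ t, w₂ v • p v := Finset.sum_congr rfl fun v hv => by rw [hueq_t v hv]

lemma GP.interior_union_empty {X : Type*} [TopologicalSpace X] {A B : Set X}
    (hA : IsClosed A) (hiA : interior A = ∅) (hiB : interior B = ∅) :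
    interior (A ∪ B) = ∅ := by
  have h1 : interior (A ∪ B) \ A ⊆ interior B := by
    refine interior_maximal ?_ (isOpen_interior.sdiff hA)
    intro y hy
    rcases interior_subset hy.1 with h | h
    · exact absurd h hy.2
    · exact h
  have h2 : interior (A ∪ B) ⊆ A := by
    intro y hy
    by_contra hyA
    have := h1 ⟨hy, hyA⟩
    rw [hiB] at this
    exact this
  have h3 := interior_maximal h2 isOpen_interior
  rw [hiA] at h3
  exact Set.subset_empty_iff.mp h3

lemma GP.interior_biUnion_empty {X ι : Type*} [TopologicalSpace X] {I : Set ι} (hI : I.Finite)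
    {B : ι → Set X} (hcl : ∀ i ∈ I, IsClosed (B i)) (hint : ∀ i ∈ I, interior (B i) = ∅) :
    interior (⋃ i ∈ I, B i) = ∅ := by
  revert hcl hint
  refine Set.Finite.induction_on I hI (by simp) ?_
  intro a s' ha hfin ih hcl hint
  rw [Set.biUnion_insert]
  exact GP.interior_union_empty (hcl a (Set.mem_insert _ _)) (hint a (Set.mem_insert _ _))
    (ih (fun i hi => hcl i (Set.mem_insert_of_mem _ hi))
      (fun i hi => hint i (Set.mem_insert_of_mem _ hi)))


def GP.uextFun {E : Type*} [DecidableEq E] (n : ℕ) (V : Finset E)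
    (u : ↥V → Fin (n + 1) → ℝ) : E → Fin (n + 1) → ℝ :=
  fun v => if h : v ∈ V then u ⟨v, h⟩ else 0

def GP.badB {E : Type*} [DecidableEq E] (n : ℕ) (V : Finset E)
    (f : E → Fin (n + 1) → ℝ) (S : Fin (n + 2) → Finset E) :
    Set (↥V → Fin (n + 1) → ℝ) :=
  {u | ∃ x : Fin (n + 1) → ℝ, ∀ i, ∃ w : E → ℝ, (∀ v ∈ S i, 0 ≤ w v) ∧
    (∑ v ∈ S i, w v) = 1 ∧ (∑ v ∈ S i, w v • (f v + GP.uextFun n V u v)) = x}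

lemma GP.continuous_uext {E : Type*} [DecidableEq E] (n : ℕ) (V : Finset E) (v : E) :
    Continuous (fun u : ↥V → Fin (n + 1) → ℝ => GP.uextFun n V u v) := by
  by_cases h : v ∈ V
  · have : (fun u : ↥V → Fin (n + 1) → ℝ => GP.uextFun n V u v)
        = fun u => u ⟨v, h⟩ := by
      funext u; simp [GP.uextFun, h]
    rw [this]; exact continuous_apply _
  · have : (fun u : ↥V → Fin (n + 1) → ℝ => GP.uextFun n V u v)
        = fun _ => 0 := by
      funext u; simp [GP.uextFun, h]
    rw [this]; exact continuous_const

lemma GP.badB_closed {E : Type*} [NormedAddCommGroup E] [NormedSpace ℝ E] [DecidableEq E]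
    (n : ℕ) (V : Finset E) (f : E → Fin (n + 1) → ℝ) (S : Fin (n + 2) → Finset E) :
    IsClosed (GP.badB n V f S) := by
  haveI : ∀ i : Fin (n + 2), CompactSpace {w : ↥(S i) → ℝ // w ∈ stdSimplex ℝ ↥(S i)} :=
    fun i => isCompact_iff_compactSpace.mp (isCompact_stdSimplex _ _)
  set ΛT := (Π i : Fin (n + 2), {w : ↥(S i) → ℝ // w ∈ stdSimplex ℝ ↥(S i)}) with hΛT
  set cmb : Fin (n + 2) → ((↥V → Fin (n + 1) → ℝ) × ΛT) → (Fin (n + 1) → ℝ) :=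
    fun i p => ∑ v ∈ (S i).attach, ((p.2 i : ↥(S i) → ℝ) v) • (f ↑v + GP.uextFun n V p.1 ↑v)
    with hcmb
  have hcont : ∀ i, Continuous (cmb i) := by
    intro i
    apply continuous_finset_sum
    intro v _
    apply Continuous.fun_smul
    · exact (continuous_apply v).comp
        ((continuous_subtype_val).comp ((continuous_apply i).comp continuous_snd))
    · exact continuous_const.add ((GP.continuous_uext n V ↑v).comp continuous_fst)
  set C : Set ((↥V → Fin (n + 1) → ℝ) × ΛT) := {p | ∀ i, cmb i p = cmb 0 p} with hC
  have hCclosed : IsClosed C := by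
    have : C = ⋂ i, {p | cmb i p = cmb 0 p} := by
      ext p; simp [hC, Set.mem_iInter]
    rw [this]
    exact isClosed_iInter fun i => isClosed_eq (hcont i) (hcont 0)
  have himg : GP.badB n V f S = Prod.fst '' C := by
    ext u
    constructor
    · rintro ⟨x, hx⟩
      choose w hw0 hw1 hw2 using hx
      have hsum : ∀ j, cmb j (u, fun i => ⟨fun v => w i ↑v,
          fun v => hw0 i ↑v v.2, by
            rw [Finset.univ_eq_attach]
            exact (Finset.sum_attach _ _).trans (hw1 i)⟩) = x := by
        intro j
        simp only [hcmb]
        exact (Finset.sum_attach _ _).trans (hw2 j)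
      refine ⟨(u, fun i => ⟨fun v => w i ↑v, fun v => hw0 i ↑v v.2, by
            rw [Finset.univ_eq_attach]
            exact (Finset.sum_attach _ _).trans (hw1 i)⟩), ?_, rfl⟩
      intro i
      rw [hsum i, hsum 0]
    · rintro ⟨⟨u', lam⟩, hmem, rfl⟩
      refine ⟨cmb 0 (u', lam), fun i => ?_⟩
      refine ⟨fun v => if h : v ∈ S i then (lam i : ↥(S i) → ℝ) ⟨v, h⟩ else 0, ?_, ?_, ?_⟩
      · intro v hv; simp only [dif_pos hv]; exact (lam i).2.1 _
      · rw [← Finset.sum_attach (S i) (fun v => if h : v ∈ S i then (lam i : ↥(S i) → ℝ) ⟨v, h⟩ else 0)]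
        rw [Finset.sum_congr rfl (fun v _ => by rw [dif_pos v.2, Subtype.coe_eta])]
        rw [← Finset.univ_eq_attach]
        exact (lam i).2.2
      · rw [← Finset.sum_attach (S i) (fun v =>
          (if h : v ∈ S i then (lam i : ↥(S i) → ℝ) ⟨v, h⟩ else 0) • (f v + GP.uextFun n V u' v))]
        rw [Finset.sum_congr rfl (fun v _ => by rw [dif_pos v.2, Subtype.coe_eta])]
        exact hmem i
  rw [himg]
  exact isClosedMap_fst_of_compactSpace C hCclosed

lemma GP.badB_interior {E : Type*} [NormedAddCommGroup E] [NormedSpace ℝ E] [DecidableEq E]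
    (n : ℕ) (V : Finset E) (f : E → Fin (n + 1) → ℝ) (S : Fin (n + 2) → Finset E)
    (hsub : ∀ i, S i ⊆ V) (hne : ∀ i, (S i).Nonempty) (hcard : ∀ i, (S i).card ≤ n + 1)
    (hdisj : ∀ i j, i ≠ j → Disjoint (S i) (S j)) :
    interior (GP.badB n V f S) = ∅ := by
  by_contra hcon
  obtain ⟨u₀, hu₀⟩ := Set.nonempty_iff_ne_empty.mpr hcon
  obtain ⟨ρ, hρ, hball⟩ := Metric.mem_nhds_iff.mp (mem_interior_iff_mem_nhds.mp hu₀)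
  have hlemA := GP.lemA n S hne hcard (fun v => f v + GP.uextFun n V u₀ v)
  have hsubset : Metric.ball (0 : Fin (n + 2) → Fin (n + 1) → ℝ) ρ ⊆
      {t : Fin (n + 2) → Fin (n + 1) → ℝ | ∃ x : Fin (n + 1) → ℝ, ∀ i, ∃ w : E → ℝ,
        (∀ v ∈ S i, 0 ≤ w v) ∧ (∑ v ∈ S i, w v) = 1 ∧
        (∑ v ∈ S i, w v • ((f v + GP.uextFun n V u₀ v) + t i)) = x} := by
    intro t ht
    set ι : ↥V → Fin (n + 1) → ℝ :=
      fun v => if h : ∃ i, (v : E) ∈ S i then t h.choose else 0 with hι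
    have hιval : ∀ (i : Fin (n + 2)) (v : E) (hv : v ∈ S i) (hvV : v ∈ V),
        ι ⟨v, hvV⟩ = t i := by
      intro i v hv hvV
      have hex : ∃ j, v ∈ S j := ⟨i, hv⟩
      have hch : hex.choose = i := by
        by_contra hne'
        exact absurd hv (Finset.disjoint_left.mp (hdisj _ _ hne') hex.choose_spec)
      simp only [hι, dif_pos hex, hch]
    have hnorm : ‖ι‖ ≤ ‖t‖ := by
      refine pi_norm_le_iff_of_nonneg (norm_nonneg t) |>.mpr fun vv => ?_
      rw [hι]
      simp only
      split_ifs with h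
      · exact norm_le_pi_norm t _
      · simp
    have humem : u₀ + ι ∈ Metric.ball u₀ ρ := by
      rw [Metric.mem_ball, dist_eq_norm, add_sub_cancel_left]
      calc ‖ι‖ ≤ ‖t‖ := hnorm
        _ < ρ := by rwa [Metric.mem_ball, dist_eq_norm, sub_zero] at ht
    obtain ⟨x, hx⟩ := hball humem
    refine ⟨x, fun i => ?_⟩
    obtain ⟨w, hw0, hw1, hw2⟩ := hx i
    refine ⟨w, hw0, hw1, ?_⟩
    rw [← hw2]
    refine Finset.sum_congr rfl fun v hv => ?_
    have hvV : v ∈ V := hsub i hv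
    have huext : GP.uextFun n V (u₀ + ι) v = GP.uextFun n V u₀ v + t i := by
      simp only [GP.uextFun, dif_pos hvV, Pi.add_apply]
      rw [hιval i v hv hvV]
    rw [huext, add_assoc]
  have h0 : (0 : Fin (n + 2) → Fin (n + 1) → ℝ) ∈ interior
      {t : Fin (n + 2) → Fin (n + 1) → ℝ | ∃ x : Fin (n + 1) → ℝ, ∀ i, ∃ w : E → ℝ,
        (∀ v ∈ S i, 0 ≤ w v) ∧ (∑ v ∈ S i, w v) = 1 ∧
        (∑ v ∈ S i, w v • ((f v + GP.uextFun n V u₀ v) + t i)) = x} :=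
    interior_maximal hsubset Metric.isOpen_ball (Metric.mem_ball_self hρ)
  exact Set.eq_empty_iff_forall_notMem.mp hlemA _ h0

end GPAuxiliary

/-- **General position lemma.** A simplicial map `f : P → ℝ^{n+1}` from a finite
`n`-dimensional simplicial complex can be `δ`-perturbed to a simplicial map `g` such that the
images of any `n+2` pairwise disjoint simplices of `P` have empty intersection. -/
theorem general_position_perturbation (n : ℕ) (δ : ℝ) (hδ : 0 < δ) {E : Type*}
    [NormedAddCommGroup E] [NormedSpace ℝ E] (K : Geometry.SimplicialComplex ℝ E)
    (hKfin : K.faces.Finite) (hKdim : ∀ s ∈ K.faces, s.card ≤ n + 1)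
    (hKdim' : ∃ s ∈ K.faces, s.card = n + 1)
    (f : E → (Fin (n + 1) → ℝ)) (hf : IsSimplicialMap K f) :
    ∃ g : E → (Fin (n + 1) → ℝ), IsSimplicialMap K g ∧
      (∀ x ∈ K.space, dist (f x) (g x) < δ) ∧
      ∀ Δ : Fin (n + 2) → Finset E, (∀ i, Δ i ∈ K.faces) →
        (∀ i j, i ≠ j → convexHull ℝ ((Δ i : Set E)) ∩ convexHull ℝ ((Δ j : Set E)) = ∅) →
        ⋂ i, g '' (convexHull ℝ ((Δ i : Set E))) = ∅ := by
  classical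
  -- the (finite) vertex set
  set V : Finset E := hKfin.toFinset.biUnion id with hV
  have hVsub : ∀ {s : Finset E}, s ∈ K.faces → s ⊆ V := by
    intro s hs v hv
    rw [hV, Finset.mem_biUnion]
    exact ⟨s, hKfin.mem_toFinset.mpr hs, hv⟩
  -- the finite collection of relevant families of faces
  set fams : Set (Fin (n + 2) → Finset E) := {S | (∀ i, S i ⊆ V) ∧ (∀ i, (S i).Nonempty) ∧
    (∀ i, (S i).card ≤ n + 1) ∧ ∀ i j, i ≠ j → Disjoint (S i) (S j)} with hfams
  have hfamsfin : fams.Finite := by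
    refine Set.Finite.subset (Set.Finite.pi (fun i : Fin (n + 2) => V.powerset.finite_toSet)) ?_
    intro S hS
    rw [Set.mem_univ_pi]
    intro i
    rw [Finset.mem_coe, Finset.mem_powerset]
    exact hS.1 i
  -- the union of all bad sets has empty interior
  have hint : interior (⋃ S ∈ fams, GP.badB n V f S) = ∅ := by
    refine GP.interior_biUnion_empty hfamsfin (fun S _ => GP.badB_closed n V f S) ?_
    intro S hS
    exact GP.badB_interior n V f S hS.1 hS.2.1 hS.2.2.1 hS.2.2.2
  -- pick a good small perturbation u
  have hδ2 : (0 : ℝ) < δ / 2 := by linarith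
  have hnotsub : ¬ Metric.ball (0 : ↥V → Fin (n + 1) → ℝ) (δ / 2) ⊆
      ⋃ S ∈ fams, GP.badB n V f S := by
    intro hsub
    have h1 := interior_maximal hsub Metric.isOpen_ball
    rw [hint] at h1
    exact Set.notMem_empty _ (h1 (Metric.mem_ball_self hδ2))
  obtain ⟨u, huball, hugood⟩ := Set.not_subset.mp hnotsub
  have hunorm : ∀ v : E, ‖GP.uextFun n V u v‖ < δ / 2 := by
    intro v
    by_cases h : v ∈ V
    · rw [GP.uextFun, dif_pos h]
      refine lt_of_le_of_lt (norm_le_pi_norm u _) ?_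
      rwa [Metric.mem_ball, dist_eq_norm, sub_zero] at huball
    · rw [GP.uextFun, dif_neg h]
      simpa using hδ2
  -- the perturbed vertex map
  set p : E → Fin (n + 1) → ℝ := fun v => f v + GP.uextFun n V u v with hp
  -- the perturbed simplicial map
  set P : E → Prop := fun x => ∃ s, s ∈ K.faces ∧ ∃ w : E → ℝ, (∀ v ∈ s, 0 ≤ w v) ∧
    (∑ v ∈ s, w v) = 1 ∧ (∑ v ∈ s, w v • v) = x with hP
  set g : E → Fin (n + 1) → ℝ := fun x =>
    if h : P x then ∑ v ∈ h.choose, h.choose_spec.2.choose v • p v else f x with hg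
  have gspec : ∀ s ∈ K.faces, ∀ w : E → ℝ, (∀ v ∈ s, 0 ≤ w v) → (∑ v ∈ s, w v) = 1 →
      g (∑ v ∈ s, w v • v) = ∑ v ∈ s, w v • p v := by
    intro s hs w hw0 hw1
    have hPx : P (∑ v ∈ s, w v • v) := ⟨s, hs, w, hw0, hw1, rfl⟩
    rw [hg]
    simp only
    rw [dif_pos hPx]
    obtain ⟨hs0, w0, hw00, hw01, hw02⟩ := hPx.choose_spec
    exact GP.consist K hPx.choose_spec.1 hs _ w hPx.choose_spec.2.choose_spec.1
      hPx.choose_spec.2.choose_spec.2.1 hw0 hw1 hPx.choose_spec.2.choose_spec.2.2 p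
  have gvert : ∀ (s : Finset E), s ∈ K.faces → ∀ v ∈ s, g v = p v := by
    intro s hs v hv
    have hsing : {v} ∈ K.faces :=
      K.down_closed hs (Finset.singleton_subset_iff.mpr hv) (Finset.singleton_nonempty v)
    have hcomb : ∑ x ∈ ({v} : Finset E), (fun y => if y = v then (1 : ℝ) else 0) x • x = v := by
      simp
    have := gspec {v} hsing (fun y => if y = v then (1 : ℝ) else 0)
      (fun y _ => by split_ifs <;> norm_num)
      (by simp)
    rw [hcomb] at this
    rw [this]
    simp
  have hgsimp : IsSimplicialMap K g := by
    intro s hs w hw0 hw1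
    rw [gspec s hs w hw0 hw1]
    exact Finset.sum_congr rfl fun v hv => by rw [gvert s hs v hv]
  refine ⟨g, hgsimp, ?_, ?_⟩
  · -- distance estimate
    intro x hx
    rw [Geometry.SimplicialComplex.mem_space_iff] at hx
    obtain ⟨s, hs, hxs⟩ := hx
    rw [Finset.convexHull_eq] at hxs
    obtain ⟨w, hw0, hw1, hcm⟩ := hxs
    rw [Finset.centerMass_eq_of_sum_1 _ _ hw1] at hcm
    simp only [id] at hcm
    rw [← hcm, gspec s hs w hw0 hw1, hf s hs w hw0 hw1, dist_eq_norm,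
      ← Finset.sum_sub_distrib]
    have hterm : ∀ v ∈ s, w v • f v - w v • p v = w v • (-(GP.uextFun n V u v)) := by
      intro v _
      rw [hp]
      simp only [← smul_sub]
      congr 1
      abel
    calc ‖∑ v ∈ s, (w v • f v - w v • p v)‖ ≤ ∑ v ∈ s, ‖w v • f v - w v • p v‖ :=
          norm_sum_le _ _
      _ ≤ ∑ v ∈ s, w v * (δ / 2) := by
          refine Finset.sum_le_sum fun v hv => ?_
          rw [hterm v hv, norm_smul, Real.norm_eq_abs, abs_of_nonneg (hw0 v hv), norm_neg]
          exact mul_le_mul_of_nonneg_left (le_of_lt (hunorm v)) (hw0 v hv)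
      _ = δ / 2 := by rw [← Finset.sum_mul, hw1, one_mul]
      _ < δ := by linarith
  · -- general position
    intro Δ hΔfaces hΔdisj
    by_contra hcon
    obtain ⟨x, hx⟩ := Set.nonempty_iff_ne_empty.mpr hcon
    rw [Set.mem_iInter] at hx
    have hfam : Δ ∈ fams := by
      refine ⟨fun i => hVsub (hΔfaces i), fun i => ?_, fun i => hKdim _ (hΔfaces i), ?_⟩
      · rw [Finset.nonempty_iff_ne_empty]
        rintro h
        exact K.empty_notMem (h ▸ hΔfaces i)
      · intro i j hij
        rw [Finset.disjoint_left]
        intro v hvi hvj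
        have h1 : (v : E) ∈ convexHull ℝ ((Δ i : Set E)) :=
          subset_convexHull ℝ _ (Finset.mem_coe.mpr hvi)
        have h2 : (v : E) ∈ convexHull ℝ ((Δ j : Set E)) :=
          subset_convexHull ℝ _ (Finset.mem_coe.mpr hvj)
        have := hΔdisj i j hij
        exact Set.eq_empty_iff_forall_notMem.mp this v ⟨h1, h2⟩
    refine hugood (Set.mem_biUnion hfam ?_)
    refine ⟨x, fun i => ?_⟩
    obtain ⟨y, hy, hgy⟩ := hx i
    rw [Finset.convexHull_eq] at hy
    obtain ⟨w, hw0, hw1, hcm⟩ := hy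
    rw [Finset.centerMass_eq_of_sum_1 _ _ hw1] at hcm
    simp only [id] at hcm
    refine ⟨w, hw0, hw1, ?_⟩
    have hgyv : g y = ∑ v ∈ Δ i, w v • p v := by
      rw [← hcm]
      exact gspec _ (hΔfaces i) w hw0 hw1
    calc ∑ v ∈ Δ i, w v • (f v + GP.uextFun n V u v) = g y := hgyv.symm
      _ = x := hgy
end
end

section
/- Let (X,d) be a compact metric space with topological dimension dim X ≤ n, and let F_1, …, F_{n+2} be pairwise disjoint closed subsets of X. Then the set {f ∈ C(X, ℝ^{n+1}) | f(F_1) ∩ f(F_2) ∩ ⋯ ∩ f(F_{n+2}) = ∅} is open and dense in C(X, ℝ^{n+1}) with respect to the uniform metric. -/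
open Filter Topology Pointwise ENNReal
open scoped ENat

noncomputable section

open Metric

section Chain
variable {E : Type*} [PseudoMetricSpace E]

open scoped Classical in
/-- Points of `A` reachable from `x` in at most `k` chain steps of size `< η`. -/
noncomputable def reachSet (A : Finset E) (η : ℝ) (x : E) : ℕ → Finset E
  | 0 => A.filter (· = x)
  | (k+1) => A.filter (fun a => a ∈ reachSet A η x k ∨ ∃ b ∈ reachSet A η x k, dist b a < η)

lemma mem_reachSet_succ {A : Finset E} {η : ℝ} {x a : E} {k : ℕ} :
    a ∈ reachSet A η x (k+1) ↔
      a ∈ A ∧ (a ∈ reachSet A η x k ∨ ∃ b ∈ reachSet A η x k, dist b a < η) := by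
  simp [reachSet]

lemma mem_reachSet_zero {A : Finset E} {η : ℝ} {x a : E} :
    a ∈ reachSet A η x 0 ↔ a ∈ A ∧ a = x := by
  simp [reachSet]

lemma reachSet_subset (A : Finset E) (η : ℝ) (x : E) (k : ℕ) : reachSet A η x k ⊆ A := by
  cases k with
  | zero => intro a ha; exact (mem_reachSet_zero.mp ha).1
  | succ k => intro a ha; exact (mem_reachSet_succ.mp ha).1

lemma reachSet_mono (A : Finset E) (η : ℝ) (x : E) (k : ℕ) :
    reachSet A η x k ⊆ reachSet A η x (k+1) := by
  intro a ha
  exact mem_reachSet_succ.mpr ⟨reachSet_subset A η x k ha, Or.inl ha⟩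

lemma dist_le_of_mem_reachSet {A : Finset E} {η : ℝ} (hη : 0 ≤ η) {x : E} :
    ∀ k, ∀ a ∈ reachSet A η x k, dist x a ≤ k * η := by
  intro k
  induction k with
  | zero =>
    intro a ha
    rw [mem_reachSet_zero] at ha
    simp [ha.2]
  | succ k ih =>
    intro a ha
    rw [mem_reachSet_succ] at ha
    rcases ha.2 with h | ⟨b, hb, hba⟩
    · have := ih a h
      have hk : (k : ℝ) * η ≤ (↑(k+1)) * η := by
        apply mul_le_mul_of_nonneg_right _ hη
        push_cast; linarith
      linarith
    · have h1 := ih b hb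
      have h2 := dist_triangle x b a
      have : dist x a ≤ k * η + η := by linarith [hba.le]
      push_cast
      linarith

lemma reachSet_stab {A : Finset E} {η : ℝ} {x : E} {k : ℕ}
    (h : reachSet A η x (k+1) = reachSet A η x k) :
    ∀ j, reachSet A η x (k+j) = reachSet A η x k := by
  intro j
  induction j with
  | zero => rfl
  | succ j ih =>
    have : reachSet A η x (k+j+1) = reachSet A η x (k+1) := by
      ext a
      rw [mem_reachSet_succ, mem_reachSet_succ]
      simp only [ih]
    rw [show k + (j+1) = k + j + 1 from rfl, this, h]

lemma exists_reachSet_stab (A : Finset E) (η : ℝ) (x : E) (hx : x ∈ A) :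
    ∃ k ≤ A.card, reachSet A η x (k+1) = reachSet A η x k := by
  by_contra hcon
  push_neg at hcon
  have key : ∀ k ≤ A.card + 1, k ≤ (reachSet A η x k).card := by
    intro k
    induction k with
    | zero => intro _; exact Nat.zero_le _
    | succ k ih =>
      intro hk
      have h1 : k ≤ (reachSet A η x k).card := ih (le_trans (Nat.le_succ k) hk)
      have hne : reachSet A η x (k+1) ≠ reachSet A η x k :=
        hcon k (Nat.lt_succ_iff.mp hk)
      have hss : reachSet A η x k ⊂ reachSet A η x (k+1) :=
        Finset.ssubset_iff_subset_ne.mpr ⟨reachSet_mono A η x k, fun hh => hne hh.symm⟩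
      have := Finset.card_lt_card hss
      omega
  have h2 := key (A.card + 1) le_rfl
  have h3 := Finset.card_le_card (reachSet_subset A η x (A.card + 1))
  omega

lemma mem_reachSet_of_chain {A : Finset E} {η : ℝ} {x y : E}
    (h : Relation.ReflTransGen (fun a b => a ∈ A ∧ b ∈ A ∧ dist a b < η) x y) (hx : x ∈ A) :
    ∃ k, y ∈ reachSet A η x k := by
  induction h with
  | refl => exact ⟨0, mem_reachSet_zero.mpr ⟨hx, rfl⟩⟩
  | tail hab hbc ih =>
    obtain ⟨k, hk⟩ := ih
    exact ⟨k+1, mem_reachSet_succ.mpr ⟨hbc.2.1, Or.inr ⟨_, hk, hbc.2.2⟩⟩⟩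

/-- Key chain bound: a chain of steps `< η` inside a finite set `A` cannot move a point
further than `card A * η`. -/
lemma dist_le_card_mul_of_chain {A : Finset E} {η : ℝ} (hη : 0 ≤ η) {x y : E}
    (h : Relation.ReflTransGen (fun a b => a ∈ A ∧ b ∈ A ∧ dist a b < η) x y) :
    dist x y ≤ A.card * η := by
  rcases Relation.ReflTransGen.cases_head h with rfl | ⟨b, hab, _⟩
  · simp [mul_nonneg (Nat.cast_nonneg _) hη]
  · have hx : x ∈ A := hab.1
    obtain ⟨k0, hk0le, hstab⟩ := exists_reachSet_stab A η x hx
    obtain ⟨k, hk⟩ := mem_reachSet_of_chain h hx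
    have hyk0 : y ∈ reachSet A η x k0 := by
      rcases le_or_gt k k0 with hle | hlt
      · have hmono : ∀ j, reachSet A η x k ⊆ reachSet A η x (k + j) := by
          intro j
          induction j with
          | zero => exact Finset.Subset.refl _
          | succ j ih => exact ih.trans (reachSet_mono A η x (k+j))
        have h2 := hmono (k0 - k)
        rw [Nat.add_sub_cancel' hle] at h2
        exact h2 hk
      · have := reachSet_stab hstab (k - k0)
        rw [Nat.add_sub_cancel' hlt.le] at this
        rw [← this]
        exact hk
    calc dist x y ≤ k0 * η := dist_le_of_mem_reachSet hη k0 y hyk0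
      _ ≤ A.card * η := by
        apply mul_le_mul_of_nonneg_right _ hη
        exact_mod_cast hk0le

lemma chain_symm {A : Set E} {η : ℝ} {x y : E}
    (h : Relation.ReflTransGen (fun a b => a ∈ A ∧ b ∈ A ∧ dist a b < η) x y) :
    Relation.ReflTransGen (fun a b => a ∈ A ∧ b ∈ A ∧ dist a b < η) y x := by
  induction h with
  | refl => exact Relation.ReflTransGen.refl
  | tail hab hbc ih =>
    have hstep : (fun a b => a ∈ A ∧ b ∈ A ∧ dist a b < η) _ _ :=
      ⟨hbc.2.1, hbc.1, by rw [dist_comm]; exact hbc.2.2⟩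
    exact Relation.ReflTransGen.head hstep ih

end Chain


section Brick

/-- Shifted-grid cover of `ℝⁿ`: `n+1` families of disjoint open cubes, of mesh `< η`,
which together cover. Total multiplicity is at most `n+1`. -/
lemma brick_cover (n : ℕ) {η : ℝ} (hη : 0 < η) :
    ∃ U : (Fin (n+1) × (Fin n → ℤ)) → Set (Fin n → ℝ),
      (∀ p, IsOpen (U p)) ∧ (∀ t, ∃ p, t ∈ U p) ∧
      (∀ p s t, s ∈ U p → t ∈ U p → dist s t < η) ∧
      (∀ t k z z', t ∈ U (k,z) → t ∈ U (k,z') → z = z') := by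
  classical
  obtain ⟨lam, hlam⟩ : ∃ l : ℝ, l = η/2 := ⟨_, rfl⟩
  have hlam0 : 0 < lam := by rw [hlam]; positivity
  obtain ⟨γ, hγ⟩ : ∃ g : ℝ, g = 1/(4*((n:ℝ)+1)) := ⟨_, rfl⟩
  have hn1 : (1:ℝ) ≤ (n:ℝ)+1 := by
    have : (0:ℝ) ≤ n := Nat.cast_nonneg n
    linarith
  have hγ0 : 0 < γ := by rw [hγ]; positivity
  have hγ4 : γ ≤ 1/4 := by
    rw [hγ, div_le_div_iff₀ (by positivity) (by norm_num)]
    nlinarith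
  have hθex : ∃ f : (Fin n → ℝ) → Fin (n+1) → Fin n → ℝ,
      f = fun (t : Fin n → ℝ) (k : Fin (n+1)) (i : Fin n) => t i / lam - ((k:ℕ):ℝ)/((n:ℝ)+1) :=
    ⟨_, rfl⟩
  obtain ⟨θ, hθ⟩ := hθex
  have hθdiff : ∀ (t : Fin n → ℝ) (k k' : Fin (n+1)) (i : Fin n),
      θ t k i - θ t k' i = ((k':ℝ) - (k:ℝ))/((n:ℝ)+1) := by
    intro t k k' i
    rw [hθ]
    ring
  refine ⟨fun p => {t | ∀ i, (p.2 i : ℝ) + γ < θ t p.1 i ∧ θ t p.1 i < p.2 i + 1 - γ},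
    ?_, ?_, ?_, ?_⟩
  · -- open
    rintro ⟨k, z⟩
    dsimp only
    have heq : {t : Fin n → ℝ | ∀ i, (z i : ℝ) + γ < θ t k i ∧ θ t k i < z i + 1 - γ}
        = ⋂ i, {t : Fin n → ℝ | (z i : ℝ) + γ < θ t k i ∧ θ t k i < z i + 1 - γ} := by
      ext t; simp [Set.mem_iInter]
    rw [heq]
    apply isOpen_iInter_of_finite
    intro i
    have hc : Continuous fun t : Fin n → ℝ => θ t k i := by
      rw [hθ]
      apply Continuous.sub _ continuous_const
      exact (continuous_apply i).div_const _
    have hop : IsOpen ((fun t => θ t k i) ⁻¹' Set.Ioo ((z i : ℝ) + γ) ((z i:ℝ) + 1 - γ)) :=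
      isOpen_Ioo.preimage hc
    exact hop
  · -- coverage
    intro t
    set B : Finset (Fin (n+1)) :=
      Finset.univ.filter (fun k => ∃ i, |θ t k i - round (θ t k i)| ≤ γ) with hB
    have hwit : ∀ k ∈ B, ∃ i, |θ t k i - round (θ t k i)| ≤ γ := by
      intro k hk
      exact (Finset.mem_filter.mp hk).2
    have hBcard : B.card ≤ n := by
      rcases Nat.eq_zero_or_pos n with hn0 | hpos
      · subst hn0
        have : B = ∅ := by
          rw [hB]
          apply Finset.filter_false_of_mem
          intro k _
          rintro ⟨i, -⟩
          exact i.elim0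
        simp [this]
      · have hdef : Fin n := ⟨0, hpos⟩
        have := Finset.card_le_card_of_injOn (f := fun k => if h : k ∈ B then
            Classical.choose (hwit k h) else hdef)
          (fun k _ => Finset.mem_univ _)
          (by
            intro k hk k' hk' heq
            by_contra hne
            have hk1 : k ∈ B := Finset.mem_coe.mp hk
            have hk1' : k' ∈ B := Finset.mem_coe.mp hk'
            simp only [dif_pos hk1, dif_pos hk1'] at heq
            set i := Classical.choose (hwit k hk1) with hi
            have h1 : |θ t k i - round (θ t k i)| ≤ γ := Classical.choose_spec (hwit k hk1)
            have h2 : |θ t k' i - round (θ t k' i)| ≤ γ := by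
              rw [heq]
              exact Classical.choose_spec (hwit k' hk1')
            set r := round (θ t k i)
            set r' := round (θ t k' i)
            set c : ℤ := (k' : ℤ) - (k : ℤ) with hc
            have hc0 : c ≠ 0 := by
              simp only [hc, sub_ne_zero]
              intro h
              exact hne (Fin.ext (by exact_mod_cast h.symm))
            have hcabs : |c| ≤ (n:ℤ) := by
              have h1' : (k':ℤ) ≤ n := by exact_mod_cast Nat.lt_succ_iff.mp k'.2
              have h2' : (k:ℤ) ≤ n := by exact_mod_cast Nat.lt_succ_iff.mp k.2
              have h3 : (0:ℤ) ≤ (k':ℤ) := Int.ofNat_nonneg _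
              have h4 : (0:ℤ) ≤ (k:ℤ) := Int.ofNat_nonneg _
              rw [abs_le]; omega
            set m : ℤ := r - r' with hm
            have hne2 : c - m*((n:ℤ)+1) ≠ 0 := by
              intro h
              have hcm : c = m * ((n:ℤ)+1) := by omega
              rcases eq_or_ne m 0 with hm0 | hm0
              · rw [hm0, zero_mul] at hcm; exact hc0 hcm
              · have hm1 : (1:ℤ) ≤ |m| := Int.one_le_abs hm0
                have habs : |c| = |m| * ((n:ℤ)+1) := by
                  rw [hcm, abs_mul, abs_of_nonneg (by omega : (0:ℤ) ≤ (n:ℤ)+1)]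
                nlinarith [Int.ofNat_nonneg n, hcabs]
            have h1int : (1:ℝ) ≤ |(c:ℝ) - (m:ℝ)*((n:ℝ)+1)| := by
              have hge : (1:ℤ) ≤ |c - m*((n:ℤ)+1)| := Int.one_le_abs hne2
              have hcast : ((|c - m*((n:ℤ)+1)| : ℤ) : ℝ) = |(c:ℝ) - (m:ℝ)*((n:ℝ)+1)| := by
                rw [Int.cast_abs]; push_cast; ring
              calc (1:ℝ) = ((1:ℤ):ℝ) := by norm_num
                _ ≤ ((|c - m*((n:ℤ)+1)| : ℤ) : ℝ) := by exact_mod_cast hge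
                _ = _ := hcast
            have hkey : 1/((n:ℝ)+1) ≤ |(c:ℝ)/((n:ℝ)+1) - (m:ℝ)| := by
              have heq2 : (c:ℝ)/((n:ℝ)+1) - (m:ℝ) = ((c:ℝ) - m*((n:ℝ)+1))/((n:ℝ)+1) := by
                field_simp
              rw [heq2, abs_div, abs_of_pos (by linarith : (0:ℝ) < (n:ℝ)+1)]
              exact div_le_div_of_nonneg_right h1int (by linarith) |>.trans_eq rfl
            have hsmall : |(c:ℝ)/((n:ℝ)+1) - (m:ℝ)| ≤ 2*γ := by
              have hrw : (c:ℝ)/((n:ℝ)+1) - (m:ℝ)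
                  = (θ t k i - r) - (θ t k' i - r') := by
                have hd := hθdiff t k k' i
                push_cast [hc, hm]
                push_cast at hd
                linarith
              rw [hrw]
              calc |(θ t k i - r) - (θ t k' i - r')|
                  ≤ |θ t k i - (r:ℝ)| + |θ t k' i - (r':ℝ)| := abs_sub _ _
                _ ≤ γ + γ := add_le_add h1 h2
                _ = 2*γ := by ring
            have hcontra : 1/((n:ℝ)+1) ≤ 2*γ := le_trans hkey hsmall
            rw [hγ] at hcontra
            rw [div_le_iff₀ (by linarith : (0:ℝ) < (n:ℝ)+1)] at hcontra
            have : 2 * (1 / (4 * ((n:ℝ) + 1))) * ((n:ℝ)+1) = 1/2 := by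
              field_simp
              ring
            rw [this] at hcontra
            norm_num at hcontra)
        simpa using this
    have hex : ∃ k, k ∉ B := by
      by_contra hc
      push_neg at hc
      have : B = Finset.univ := Finset.eq_univ_of_forall hc
      rw [this, Finset.card_univ] at hBcard
      simp at hBcard
    obtain ⟨k, hk⟩ := hex
    have hgood : ∀ i, γ < |θ t k i - round (θ t k i)| := by
      intro i
      by_contra hcon
      push_neg at hcon
      exact hk (Finset.mem_filter.mpr ⟨Finset.mem_univ _, ⟨i, hcon⟩⟩)
    refine ⟨(k, fun i => if (round (θ t k i):ℝ) < θ t k i then round (θ t k i)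
      else round (θ t k i) - 1), fun i => ?_⟩
    dsimp only
    have h1 := hgood i
    have h2 := abs_sub_round (θ t k i)
    by_cases hcase : (round (θ t k i):ℝ) < θ t k i
    · rw [if_pos hcase]
      have ha : γ < θ t k i - round (θ t k i) := by
        rw [abs_of_pos (by linarith)] at h1
        linarith
      have hb : θ t k i - round (θ t k i) ≤ 1/2 := by
        rw [abs_of_pos (by linarith)] at h2
        linarith
      constructor
      · linarith
      · linarith
    · rw [if_neg hcase]
      push_neg at hcase
      have hne : θ t k i ≠ (round (θ t k i):ℝ) := by
        intro h
        rw [h] at h1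
        simp at h1
        linarith
      have hlt : θ t k i < round (θ t k i) := lt_of_le_of_ne hcase hne
      have ha : γ < (round (θ t k i):ℝ) - θ t k i := by
        rw [abs_of_neg (by linarith)] at h1
        linarith
      have hb : (round (θ t k i):ℝ) - θ t k i ≤ 1/2 := by
        rw [abs_of_neg (by linarith)] at h2
        linarith
      constructor
      · push_cast
        linarith
      · push_cast
        linarith
  · -- small diameter
    rintro ⟨k, z⟩ s t hs ht
    have hd2 : dist s t ≤ η/2 := by
      apply dist_pi_le_iff (by positivity) |>.mpr
      intro i
      have h1 := hs i
      have h2 := ht i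
      dsimp only at h1 h2
      have habs : |θ s k i - θ t k i| ≤ 1 := by
        rw [abs_le]
        constructor
        · linarith [h1.1, h2.2, hγ0]
        · linarith [h1.2, h2.1, hγ0]
      have heq : s i - t i = lam * (θ s k i - θ t k i) := by
        rw [hθ]
        field_simp
        ring
      rw [Real.dist_eq, heq, abs_mul, abs_of_pos hlam0]
      calc lam * |θ s k i - θ t k i| ≤ lam * 1 :=
        mul_le_mul_of_nonneg_left habs hlam0.le
        _ = η/2 := by rw [hlam]; ring
    linarith
  · -- uniqueness of z given k
    intro t k z z' hz hz'
    funext i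
    have h1 := hz i
    have h2 := hz' i
    dsimp only at h1 h2
    have e1 : ⌊θ t k i⌋ = z i := by
      rw [Int.floor_eq_iff]
      constructor
      · linarith [h1.1, hγ0]
      · push_cast
        linarith [h1.2, hγ0]
    have e2 : ⌊θ t k i⌋ = z' i := by
      rw [Int.floor_eq_iff]
      constructor
      · linarith [h2.1, hγ0]
      · push_cast
        linarith [h2.2, hγ0]
    rw [← e1, ← e2]
end Brick


section Proj

lemma exists_notMem_finite_union_proper_subspaces {k N : ℕ}
    (W : Fin N → Submodule ℝ (Fin k → ℝ)) (hW : ∀ j, W j ≠ ⊤) :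
    ∃ v : Fin k → ℝ, ∀ j, v ∉ W j := by
  have hdense : ∀ j, Dense ((W j : Set (Fin k → ℝ))ᶜ) := by
    intro j
    have hcl : IsClosed (W j : Set (Fin k → ℝ)) := Submodule.closed_of_finiteDimensional _
    rw [← interior_eq_empty_iff_dense_compl]
    by_contra h
    exact hW j (Submodule.eq_top_of_nonempty_interior' _
      (Set.nonempty_iff_ne_empty.mpr h))
  have hopen : ∀ j, IsOpen ((W j : Set (Fin k → ℝ))ᶜ) := fun j =>
    (Submodule.closed_of_finiteDimensional _).isOpen_compl
  have hd : Dense (⋂ j, ((W j : Set (Fin k → ℝ))ᶜ)) :=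
    dense_iInter_of_isOpen hopen hdense
  obtain ⟨v, hv⟩ := hd.nonempty
  exact ⟨v, fun j => (Set.mem_iInter.mp hv j)⟩

/-- A linear map to `ℝⁿ` which is injective on each member of a finite family of
subspaces of dimension at most `n`. -/
lemma exists_linear_injOn (n : ℕ) : ∀ (k N : ℕ) (W : Fin N → Submodule ℝ (Fin k → ℝ)),
    (∀ j, Module.finrank ℝ (W j) ≤ n) →
    ∃ L : (Fin k → ℝ) →ₗ[ℝ] (Fin n → ℝ), ∀ j, ∀ w ∈ W j, L w = 0 → w = 0 := by
  intro k
  induction k using Nat.strong_induction_on with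
  | _ k IH =>
    intro N W hWrank
    rcases le_or_gt k n with hkn | hnk
    · -- k ≤ n : a genuinely injective map exists
      refine ⟨LinearMap.pi (fun i : Fin n =>
        if h : (i:ℕ) < k then LinearMap.proj (⟨i, h⟩ : Fin k) else 0), ?_⟩
      intro j w _ hLw
      funext l
      have hl : (l : ℕ) < n := lt_of_lt_of_le l.2 hkn
      have := congrFun hLw ⟨l, hl⟩
      simp only [LinearMap.pi_apply] at this
      rw [dif_pos (show ((⟨(l:ℕ), hl⟩ : Fin n) : ℕ) < k from l.2)] at this
      simpa using this
    · -- k > n : project along a generic direction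
      have hWtop : ∀ j, W j ≠ ⊤ := by
        intro j h
        have h1 : Module.finrank ℝ (W j) = k := by
          rw [h, finrank_top]
          simp [Module.finrank_fin_fun]
        have := hWrank j
        omega
      haveI : Nonempty (Fin k) := ⟨⟨0, by omega⟩⟩
      -- add ⊥ to make sure v ≠ 0
      set W' : Fin (N+1) → Submodule ℝ (Fin k → ℝ) := Fin.snoc W ⊥ with hW'
      have hW'top : ∀ j, W' j ≠ ⊤ := by
        intro j
        induction j using Fin.lastCases with
        | last =>
          rw [hW', Fin.snoc_last]
          exact bot_ne_top
        | cast j' =>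
          rw [hW', Fin.snoc_castSucc]
          exact hWtop j'
      obtain ⟨v, hv⟩ := exists_notMem_finite_union_proper_subspaces W' hW'top
      have hv0 : v ≠ 0 := by
        intro h
        apply hv (Fin.last N)
        rw [hW', Fin.snoc_last, h]
        exact Submodule.zero_mem ⊥
      have hvW : ∀ j, v ∉ W j := by
        intro j
        have := hv (Fin.castSucc j)
        rwa [hW', Fin.snoc_castSucc] at this
      -- quotient by span v
      set S : Submodule ℝ (Fin k → ℝ) := Submodule.span ℝ {v} with hS
      have hfr : Module.finrank ℝ ((Fin k → ℝ) ⧸ S) = k - 1 := by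
        have h1 := Submodule.finrank_quotient_add_finrank S
        have h3 : Module.finrank ℝ S = 1 := by
          rw [hS]; exact finrank_span_singleton hv0
        have h2 : Module.finrank ℝ (Fin k → ℝ) = k := by simp [Module.finrank_fin_fun]
        omega
      have hequiv : Nonempty (((Fin k → ℝ) ⧸ S) ≃ₗ[ℝ] (Fin (k-1) → ℝ)) := by
        apply FiniteDimensional.nonempty_linearEquiv_of_finrank_eq
        rw [hfr]
        simp [Module.finrank_fin_fun]
      obtain ⟨e⟩ := hequiv
      set P : (Fin k → ℝ) →ₗ[ℝ] (Fin (k-1) → ℝ) := e.toLinearMap.comp S.mkQ with hP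
      have hPker : ∀ x, P x = 0 → x ∈ S := by
        intro x hx
        rw [hP] at hx
        simp only [LinearMap.comp_apply] at hx
        have : S.mkQ x = 0 := by
          have := e.map_eq_zero_iff.mp hx
          exact this
        rwa [← Submodule.Quotient.mk_eq_zero, ← Submodule.mkQ_apply]
      obtain ⟨L', hL'⟩ := IH (k-1) (by omega) N (fun j => (W j).map P)
        (fun j => le_trans (Submodule.finrank_map_le P (W j)) (hWrank j))
      refine ⟨L'.comp P, ?_⟩
      intro j w hw hLw
      have hPw : P w ∈ (W j).map P := ⟨w, hw, rfl⟩
      have hP0 : P w = 0 := hL' j (P w) hPw (by simpa using hLw)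
      have hwS : w ∈ S := hPker w hP0
      rw [hS, Submodule.mem_span_singleton] at hwS
      obtain ⟨a, rfl⟩ := hwS
      rcases eq_or_ne a 0 with rfl | ha
      · simp
      · exfalso
        apply hvW j
        have : a⁻¹ • (a • v) ∈ W j := Submodule.smul_mem _ _ hw
        rwa [smul_smul, inv_mul_cancel₀ ha, one_smul] at this
end Proj


section GenPos

variable {n m : ℕ}

/-- The index type for the general position matrix. -/
abbrev GPIdx (n m : ℕ) (S : Fin (n+2) → Finset (Fin m)) :=
  Σ i : Fin (n+2), {j : Fin m // j ∈ S i}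

/-- The "general position" matrix whose injectivity certifies that the affine spans of the
`y`-images of the `S i` have no common point. -/
noncomputable def gpMat (n m : ℕ) (S : Fin (n+2) → Finset (Fin m))
    (y : Fin m → (Fin (n+1) → ℝ)) :
    Matrix (Fin (n+1) × Fin (n+2)) (GPIdx n m S) ℝ :=
  fun rb x =>
    ((if x.1 = rb.1.castSucc then (1:ℝ) else 0) - (if x.1 = rb.1.succ then (1:ℝ) else 0))
      * (Fin.snoc (y x.2.1) (1:ℝ) : Fin (n+2) → ℝ) rb.2

noncomputable def gpDet (n m : ℕ) (S : Fin (n+2) → Finset (Fin m))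
    (y : Fin m → (Fin (n+1) → ℝ)) : ℝ :=
  ((gpMat n m S y).transpose * gpMat n m S y).det

/-- The weighted sum `∑_{j ∈ S i} c_{ij} · (y_j, 1)`. -/
noncomputable def gpV (S : Fin (n+2) → Finset (Fin m)) (y : Fin m → (Fin (n+1) → ℝ))
    (c : GPIdx n m S → ℝ) (i : Fin (n+2)) : Fin (n+2) → ℝ :=
  ∑ j : {j : Fin m // j ∈ S i}, c ⟨i, j⟩ • (Fin.snoc (y j.1) 1 : Fin (n+2) → ℝ)

lemma gpMat_mulVec (S : Fin (n+2) → Finset (Fin m)) (y : Fin m → (Fin (n+1) → ℝ))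
    (c : GPIdx n m S → ℝ) (a : Fin (n+1)) (b : Fin (n+2)) :
    (gpMat n m S y).mulVec c (a, b) = gpV S y c a.castSucc b - gpV S y c a.succ b := by
  classical
  have : (gpMat n m S y).mulVec c (a, b)
      = ∑ x : GPIdx n m S,
          ((if x.1 = a.castSucc then (1:ℝ) else 0) - (if x.1 = a.succ then (1:ℝ) else 0))
            * (Fin.snoc (y x.2.1) (1:ℝ) : Fin (n+2) → ℝ) b * c x := rfl
  rw [this, ← Finset.univ_sigma_univ, Finset.sum_sigma]
  have hsum : ∀ i : Fin (n+2),
      (∑ j : {j : Fin m // j ∈ S i},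
        ((if i = a.castSucc then (1:ℝ) else 0) - (if i = a.succ then (1:ℝ) else 0))
          * (Fin.snoc (y j.1) (1:ℝ) : Fin (n+2) → ℝ) b * c ⟨i, j⟩)
      = ((if i = a.castSucc then (1:ℝ) else 0) - (if i = a.succ then (1:ℝ) else 0))
          * gpV S y c i b := by
    intro i
    rw [gpV]
    rw [Finset.sum_apply]
    rw [Finset.mul_sum]
    apply Finset.sum_congr rfl
    intro j _
    simp only [Pi.smul_apply, smul_eq_mul]
    ring
  calc (∑ i : Fin (n+2), ∑ j : {j : Fin m // j ∈ S i},
        ((if i = a.castSucc then (1:ℝ) else 0) - (if i = a.succ then (1:ℝ) else 0))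
          * (Fin.snoc (y j.1) (1:ℝ) : Fin (n+2) → ℝ) b * c ⟨i, j⟩)
      = ∑ i : Fin (n+2),
        ((if i = a.castSucc then (1:ℝ) else 0) - (if i = a.succ then (1:ℝ) else 0))
          * gpV S y c i b := by
        exact Finset.sum_congr rfl (fun i _ => hsum i)
    _ = gpV S y c a.castSucc b - gpV S y c a.succ b := by
        rw [show (∑ i : Fin (n+2),
            ((if i = a.castSucc then (1:ℝ) else 0) - (if i = a.succ then (1:ℝ) else 0))
              * gpV S y c i b)
          = ∑ i : Fin (n+2), ((if i = a.castSucc then gpV S y c i b else 0)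
              - (if i = a.succ then gpV S y c i b else 0)) from
          Finset.sum_congr rfl (fun i _ => by split_ifs <;> ring)]
        rw [Finset.sum_sub_distrib]
        rw [Finset.sum_ite_eq' Finset.univ a.castSucc (fun i => gpV S y c i b)]
        rw [Finset.sum_ite_eq' Finset.univ a.succ (fun i => gpV S y c i b)]
        simp

lemma gpDet_zero_iff (S : Fin (n+2) → Finset (Fin m)) (y : Fin m → (Fin (n+1) → ℝ)) :
    gpDet n m S y = 0 ↔ ∃ c, c ≠ 0 ∧ (gpMat n m S y).mulVec c = 0 := by
  classical
  constructor
  · intro h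
    obtain ⟨v, hv0, hv⟩ := Matrix.exists_mulVec_eq_zero_iff.mpr h
    refine ⟨v, hv0, ?_⟩
    have h2 : dotProduct ((gpMat n m S y).mulVec v) ((gpMat n m S y).mulVec v) = 0 := by
      calc dotProduct ((gpMat n m S y).mulVec v) ((gpMat n m S y).mulVec v)
          = dotProduct (Matrix.vecMul v (gpMat n m S y).transpose)
              ((gpMat n m S y).mulVec v) := by rw [Matrix.vecMul_transpose]
        _ = dotProduct v ((gpMat n m S y).transpose.mulVec ((gpMat n m S y).mulVec v)) :=
            (Matrix.dotProduct_mulVec _ _ _).symm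
        _ = dotProduct v (((gpMat n m S y).transpose * gpMat n m S y).mulVec v) := by
            rw [Matrix.mulVec_mulVec]
        _ = dotProduct v 0 := by rw [hv]
        _ = 0 := dotProduct_zero v
    exact dotProduct_self_eq_zero.mp h2
  · rintro ⟨c, hc0, hc⟩
    apply Matrix.exists_mulVec_eq_zero_iff.mp
    exact ⟨c, hc0, by rw [← Matrix.mulVec_mulVec, hc, Matrix.mulVec_zero]⟩


/-- Explicit witness configuration in general position for a fixed family `S`. -/
lemma gp_witness (n m : ℕ) (S : Fin (n+2) → Finset (Fin m))
    (hdisj : ∀ i i', i ≠ i' → Disjoint (S i) (S i'))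
    (hcard : ∀ i, (S i).card ≤ n+1) :
    ∃ y : Fin m → (Fin (n+1) → ℝ), gpDet n m S y ≠ 0 := by
  classical
  have hemb : ∀ i : Fin (n+2),
      Nonempty ({j : Fin m // j ∈ S i} ↪ {x : Fin (n+2) // x ≠ i}) := by
    intro i
    apply Function.Embedding.nonempty_of_card_le
    rw [Fintype.card_coe]
    have h1 : Fintype.card {x : Fin (n+2) // x ≠ i} = n+1 := by
      have h2 := Fintype.card_subtype_compl (fun x : Fin (n+2) => x = i)
      rw [Fintype.card_subtype_eq, Fintype.card_fin] at h2
      simpa using h2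
    rw [h1]; exact hcard i
  set kf : ∀ i : Fin (n+2), {j : Fin m // j ∈ S i} → Fin (n+2) :=
    fun i j => ((hemb i).some j).1 with hkf
  have hkf_ne : ∀ i j, kf i j ≠ i := fun i j => ((hemb i).some j).2
  have hkf_inj : ∀ i, Function.Injective (kf i) := by
    intro i a b hab
    exact (hemb i).some.injective (Subtype.val_injective hab)
  set bvec : Fin (n+2) → (Fin (n+1) → ℝ) :=
    fun k b => if (k:ℕ) = (b:ℕ) then 1 else 0 with hbvec
  set ystar : Fin m → (Fin (n+1) → ℝ) := fun j =>
    if h : ∃ i, j ∈ S i then bvec (kf h.choose ⟨j, h.choose_spec⟩) else 0 with hystar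
  have hystar_eq : ∀ (i : Fin (n+2)) (j : Fin m) (hj : j ∈ S i),
      ystar j = bvec (kf i ⟨j, hj⟩) := by
    intro i j hj
    rw [hystar]
    dsimp only
    have hex : ∃ i', j ∈ S i' := ⟨i, hj⟩
    rw [dif_pos hex]
    have hchoose : hex.choose = i := by
      by_contra hne
      exact (Finset.disjoint_left.mp (hdisj _ _ hne) hex.choose_spec) hj
    have h2 : ∀ (i' : Fin (n+2)) (h' : i' = i) (p : j ∈ S i'),
        kf i' ⟨j, p⟩ = kf i ⟨j, hj⟩ := by
      rintro i' rfl p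
      rfl
    rw [h2 _ hchoose _]
  -- snoc formula
  have hvh : ∀ (i : Fin (n+2)) (j : Fin m) (hj : j ∈ S i) (b : Fin (n+2)),
      (Fin.snoc (ystar j) (1:ℝ) : Fin (n+2) → ℝ) b
        = if b = Fin.last (n+1) then 1
          else if ((kf i ⟨j, hj⟩ : ℕ) = (b:ℕ)) then 1 else 0 := by
    intro i j hj b
    induction b using Fin.lastCases with
    | last =>
      rw [Fin.snoc_last, if_pos rfl]
    | cast b' =>
      rw [Fin.snoc_castSucc]
      rw [if_neg (Fin.castSucc_lt_last b').ne]
      rw [hystar_eq i j hj, hbvec]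
      simp
  refine ⟨ystar, ?_⟩
  intro hdet
  rw [gpDet_zero_iff] at hdet
  obtain ⟨c, hc0, hc⟩ := hdet
  apply hc0
  have hrow : ∀ (a : Fin (n+1)) (b : Fin (n+2)),
      gpV S ystar c a.castSucc b = gpV S ystar c a.succ b := by
    intro a b
    have h3 := congrFun hc (a, b)
    rw [gpMat_mulVec] at h3
    have h4 : (0 : (Fin (n+1) × Fin (n+2)) → ℝ) (a, b) = 0 := rfl
    rw [h4] at h3
    linarith
  have hVconst : ∀ i, gpV S ystar c i = gpV S ystar c 0 := by
    intro i
    induction i using Fin.induction with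
    | zero => rfl
    | succ i ih =>
      funext b
      rw [← hrow i b]
      exact congrFun ih b
  -- coordinate formula
  have hgpV : ∀ (i : Fin (n+2)) (b : Fin (n+2)),
      gpV S ystar c i b = ∑ j : {j : Fin m // j ∈ S i},
        c ⟨i, j⟩ * (if b = Fin.last (n+1) then 1
          else if ((kf i j : ℕ) = (b:ℕ)) then 1 else 0) := by
    intro i b
    rw [gpV, Finset.sum_apply]
    apply Finset.sum_congr rfl
    intro j _
    rw [Pi.smul_apply, smul_eq_mul]
    congr 1
    exact hvh i j.1 j.2 b
  -- Step A : coordinates ≠ last of the common value vanish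
  have stepA : ∀ k : Fin (n+2), k ≠ Fin.last (n+1) → gpV S ystar c 0 k = 0 := by
    intro k hk
    rw [← hVconst k, hgpV]
    apply Finset.sum_eq_zero
    intro j _
    rw [if_neg hk]
    rw [if_neg (by
      intro hval
      exact hkf_ne k j (Fin.ext hval))]
    ring
  -- Step C1 : coefficients whose label is not `last` vanish
  have stepC1 : ∀ (i : Fin (n+2)) (j : {j : Fin m // j ∈ S i}),
      kf i j ≠ Fin.last (n+1) → c ⟨i, j⟩ = 0 := by
    intro i j hlast
    have h5 : gpV S ystar c 0 (kf i j) = 0 := stepA _ hlast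
    rw [← hVconst i, hgpV] at h5
    rw [Fintype.sum_eq_single j (by
      intro j' hj'
      rw [if_neg hlast, if_neg (by
        intro hval
        exact hj' (hkf_inj i (Fin.ext hval)))]
      ring)] at h5
    rw [if_neg hlast, if_pos rfl, mul_one] at h5
    exact h5
  -- Step B : the last coordinate of the common value vanishes
  have stepB : gpV S ystar c 0 (Fin.last (n+1)) = 0 := by
    rw [← hVconst (Fin.last (n+1)), hgpV]
    apply Finset.sum_eq_zero
    intro j _
    rw [stepC1 _ j (hkf_ne _ j)]
    ring
  -- Step C2 : all coefficients vanish
  funext x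
  obtain ⟨i, j⟩ := x
  rcases eq_or_ne (kf i j) (Fin.last (n+1)) with hlast | hlast
  · have h6 := stepB
    rw [← hVconst i, hgpV] at h6
    rw [Fintype.sum_eq_single j (by
      intro j' hj'
      rw [if_pos rfl, mul_one]
      apply stepC1
      intro h7
      exact hj' (hkf_inj i (h7.trans hlast.symm)))] at h6
    rw [if_pos rfl, mul_one] at h6
    exact h6
  · exact stepC1 i j hlast

/-- If the general position determinant is nonzero, the convex hulls of the `y`-images of
the `S i` have no common point. -/
lemma gp_no_common_point {S : Fin (n+2) → Finset (Fin m)} {y : Fin m → Fin (n+1) → ℝ}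
    (hdet : gpDet n m S y ≠ 0) (p : Fin (n+1) → ℝ) :
    ¬ ∀ i, p ∈ convexHull ℝ (y '' ↑(S i)) := by
  classical
  intro hp
  apply hdet
  rw [gpDet_zero_iff]
  have hw : ∀ i : Fin (n+2), ∃ w : Fin m → ℝ, (∀ j ∈ S i, 0 ≤ w j) ∧ (∑ j ∈ S i, w j = 1)
      ∧ (∑ j ∈ S i, w j • y j = p) := by
    intro i
    have hpi := hp i
    rw [convexHull_eq] at hpi
    obtain ⟨ι, t, w, z, hw0, hw1, hz, hcm⟩ := hpi
    have ht_ne : t.Nonempty := by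
      rcases Finset.eq_empty_or_nonempty t with rfl | h
      · simp at hw1
      · exact h
    obtain ⟨l0, hl0⟩ := ht_ne
    obtain ⟨j0, hj0S, hj0y⟩ := hz l0 hl0
    have hch : ∀ l, ∃ j : Fin m, l ∈ t → (j ∈ S i ∧ y j = z l) := by
      intro l
      by_cases hl : l ∈ t
      · obtain ⟨j, hjS, hjy⟩ := hz l hl
        exact ⟨j, fun _ => ⟨hjS, hjy⟩⟩
      · exact ⟨j0, fun h => absurd h hl⟩
    choose jf hjf using hch
    refine ⟨fun j => ∑ l ∈ t.filter (fun l => jf l = j), w l, ?_, ?_, ?_⟩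
    · intro j _
      apply Finset.sum_nonneg
      intro l hl
      exact hw0 l (Finset.mem_filter.mp hl).1
    · rw [Finset.sum_fiberwise_of_maps_to (fun l hl => (hjf l hl).1) w]
      exact hw1
    · have hcm1 : t.centerMass w z = ∑ l ∈ t, w l • z l :=
        Finset.centerMass_eq_of_sum_1 t z hw1
      rw [← hcm, hcm1]
      rw [← Finset.sum_fiberwise_of_maps_to (fun l hl => (hjf l hl).1) (fun l => w l • z l)]
      apply Finset.sum_congr rfl
      intro j hj
      rw [Finset.sum_smul]
      apply Finset.sum_congr rfl
      intro l hl
      obtain ⟨hlt, hlj⟩ := Finset.mem_filter.mp hl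
      rw [← hlj, (hjf l hlt).2]
  choose wfun hw0 hw1 hwp using hw
  refine ⟨fun x => wfun x.1 x.2.1, ?_, ?_⟩
  · intro h0
    have h1 := hw1 0
    rw [Finset.sum_eq_zero (fun j hj => congrFun h0 ⟨0, ⟨j, hj⟩⟩)] at h1
    norm_num at h1
  · funext rb
    obtain ⟨a, b⟩ := rb
    rw [gpMat_mulVec]
    have hVlast : ∀ i : Fin (n+2),
        gpV S y (fun x => wfun x.1 x.2.1) i (Fin.last (n+1)) = 1 := by
      intro i
      rw [gpV, Finset.sum_apply]
      have : ∀ j : {j : Fin m // j ∈ S i},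
          ((fun x : GPIdx n m S => wfun x.1 x.2.1) ⟨i, j⟩
            • (Fin.snoc (y j.1) 1 : Fin (n+2) → ℝ)) (Fin.last (n+1)) = wfun i j.1 := by
        intro j
        rw [Pi.smul_apply, Fin.snoc_last, smul_eq_mul, mul_one]
      rw [Finset.sum_congr rfl (fun j _ => this j)]
      rw [Finset.sum_coe_sort (S i) (fun j => wfun i j)]
      exact hw1 i
    have hVcast : ∀ (i : Fin (n+2)) (b' : Fin (n+1)),
        gpV S y (fun x => wfun x.1 x.2.1) i (Fin.castSucc b') = p b' := by
      intro i b'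
      rw [gpV, Finset.sum_apply]
      have : ∀ j : {j : Fin m // j ∈ S i},
          ((fun x : GPIdx n m S => wfun x.1 x.2.1) ⟨i, j⟩
            • (Fin.snoc (y j.1) 1 : Fin (n+2) → ℝ)) (Fin.castSucc b')
            = wfun i j.1 * y j.1 b' := by
        intro j
        rw [Pi.smul_apply, Fin.snoc_castSucc, smul_eq_mul]
      rw [Finset.sum_congr rfl (fun j _ => this j)]
      rw [Finset.sum_coe_sort (S i) (fun j => wfun i j * y j b')]
      have := congrFun (hwp i) b'
      rw [Finset.sum_apply] at this
      rw [← this]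
      apply Finset.sum_congr rfl
      intro j _
      rw [Pi.smul_apply, smul_eq_mul]
    have hzero : (0 : (Fin (n+1) × Fin (n+2)) → ℝ) (a, b) = 0 := rfl
    rw [hzero]
    induction b using Fin.lastCases with
    | last => rw [hVlast, hVlast]; ring
    | cast b' => rw [hVcast, hVcast]; ring

lemma gp_continuous (S : Fin (n+2) → Finset (Fin m)) :
    Continuous fun y : Fin m → Fin (n+1) → ℝ => gpDet n m S y := by
  apply Continuous.matrix_det
  have hA : Continuous fun y : Fin m → Fin (n+1) → ℝ => gpMat n m S y := by
    apply continuous_matrix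
    intro rb x
    apply Continuous.mul continuous_const
    obtain ⟨a, b⟩ := rb
    induction b using Fin.lastCases with
    | last =>
      simp only [Fin.snoc_last]
      exact continuous_const
    | cast b' =>
      simp only [Fin.snoc_castSucc]
      exact (continuous_apply b').comp (continuous_apply x.2.1)
  exact (hA.matrix_transpose).matrix_mul hA

lemma gp_open (S : Fin (n+2) → Finset (Fin m)) :
    IsOpen {y : Fin m → Fin (n+1) → ℝ | gpDet n m S y ≠ 0} :=
  (isOpen_compl_singleton (x := (0:ℝ))).preimage (gp_continuous S)

lemma gp_dense (S : Fin (n+2) → Finset (Fin m))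
    (hdisj : ∀ i i', i ≠ i' → Disjoint (S i) (S i'))
    (hcard : ∀ i, (S i).card ≤ n+1) :
    Dense {y : Fin m → Fin (n+1) → ℝ | gpDet n m S y ≠ 0} := by
  classical
  rw [Metric.dense_iff]
  intro x r hr
  obtain ⟨ystar, hystar⟩ := gp_witness n m S hdisj hcard
  set yl : ℝ → (Fin m → Fin (n+1) → ℝ) :=
    fun s j b => x j b + s * (ystar j b - x j b) with hyl
  set Apoly : Matrix (Fin (n+1) × Fin (n+2)) (GPIdx n m S) (Polynomial ℝ) :=
    fun rb xx =>
      ((if xx.1 = rb.1.castSucc then (1:Polynomial ℝ) else 0)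
        - (if xx.1 = rb.1.succ then (1:Polynomial ℝ) else 0))
      * (Fin.snoc (fun b' => Polynomial.C (x xx.2.1 b')
            + Polynomial.X * Polynomial.C (ystar xx.2.1 b' - x xx.2.1 b'))
          (Polynomial.C 1) : Fin (n+2) → Polynomial ℝ) rb.2 with hApoly
  have hmap : ∀ s : ℝ, Apoly.map (Polynomial.eval s) = gpMat n m S (yl s) := by
    intro s
    funext rb xx
    rw [Matrix.map_apply, hApoly, gpMat]
    dsimp only
    rw [Polynomial.eval_mul, Polynomial.eval_sub]
    congr 1
    · congr 1
      · split_ifs <;> simp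
      · split_ifs <;> simp
    · obtain ⟨a, b⟩ := rb
      dsimp only
      induction b using Fin.lastCases with
      | last =>
        rw [Fin.snoc_last, Fin.snoc_last]
        simp
      | cast b' =>
        rw [Fin.snoc_castSucc, Fin.snoc_castSucc]
        rw [Polynomial.eval_add, Polynomial.eval_mul, Polynomial.eval_C, Polynomial.eval_C,
          Polynomial.eval_X]
  set Q : Polynomial ℝ := ((Apoly.transpose) * Apoly).det with hQ
  have hdeteq : ∀ s : ℝ, gpDet n m S (yl s) = Polynomial.eval s Q := by
    intro s
    rw [gpDet, ← hmap s]
    have h1 : (Apoly.map (Polynomial.eval s)).transpose = Apoly.transpose.map (Polynomial.eval s) :=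
      (Matrix.transpose_map).symm
    rw [h1]
    have hcoe : (Polynomial.eval s : Polynomial ℝ → ℝ) = ⇑(Polynomial.evalRingHom s) := by
      funext q
      simp
    rw [hcoe]
    rw [← Matrix.map_mul (f := Polynomial.evalRingHom s)]
    have h3 := RingHom.map_det (Polynomial.evalRingHom s) (Apoly.transpose * Apoly)
    rw [RingHom.mapMatrix_apply] at h3
    rw [← h3, hQ]
  have hyl1 : yl 1 = ystar := by
    funext j b
    rw [hyl]
    ring
  have hQne : Q ≠ 0 := by
    intro h0
    apply hystar
    rw [← hyl1, hdeteq 1, h0]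
    simp
  have hroots : {s : ℝ | Q.IsRoot s}.Finite := by
    by_contra hinf
    exact hQne (Polynomial.eq_zero_of_infinite_isRoot Q hinf)
  set M : ℝ := 1 + ∑ j : Fin m, ∑ b : Fin (n+1), |ystar j b - x j b| with hM
  have hM1 : (1:ℝ) ≤ M := by
    rw [hM]
    have : (0:ℝ) ≤ ∑ j : Fin m, ∑ b : Fin (n+1), |ystar j b - x j b| := by
      apply Finset.sum_nonneg
      intro j _
      apply Finset.sum_nonneg
      intro b _
      exact abs_nonneg _
    linarith
  have hMbound : ∀ j b, |ystar j b - x j b| ≤ M := by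
    intro j b
    rw [hM]
    have h1 : |ystar j b - x j b| ≤ ∑ b' : Fin (n+1), |ystar j b' - x j b'| :=
      Finset.single_le_sum (f := fun b' => |ystar j b' - x j b'|)
        (fun b' _ => abs_nonneg _) (Finset.mem_univ b)
    have h2 : (∑ b' : Fin (n+1), |ystar j b' - x j b'|)
        ≤ ∑ j' : Fin m, ∑ b' : Fin (n+1), |ystar j' b' - x j' b'| :=
      Finset.single_le_sum (f := fun j' => ∑ b' : Fin (n+1), |ystar j' b' - x j' b'|)
        (fun j' _ => Finset.sum_nonneg (fun b' _ => abs_nonneg _)) (Finset.mem_univ j)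
    linarith
  have hIoo : Set.Infinite (Set.Ioo (0:ℝ) (r/M)) := Set.Ioo_infinite (by positivity)
  obtain ⟨s, hsIoo, hsroot⟩ := hIoo.exists_notMem_finite hroots
  refine ⟨yl s, Set.mem_inter ?_ ?_⟩
  · rw [Metric.mem_ball]
    rw [dist_pi_lt_iff hr]
    intro j
    rw [dist_pi_lt_iff hr]
    intro b
    rw [Real.dist_eq]
    have : yl s j b - x j b = s * (ystar j b - x j b) := by rw [hyl]; ring
    rw [this, abs_mul, abs_of_pos hsIoo.1]
    calc s * |ystar j b - x j b| ≤ s * M :=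
        mul_le_mul_of_nonneg_left (hMbound j b) hsIoo.1.le
      _ < (r/M) * M := by
        apply mul_lt_mul_of_pos_right hsIoo.2
        linarith
      _ = r := by field_simp
  · show gpDet n m S (yl s) ≠ 0
    rw [hdeteq s]
    exact hsroot

/-- Main general position lemma: arbitrarily close to any configuration of `m` points of
`ℝ^{n+1}`, there is one for which the convex hulls of any `n+2` disjointly-indexed subsets
(each with at most `n+1` points) have no common point. -/
lemma exists_generic_points (n m : ℕ) (c0 : Fin m → Fin (n+1) → ℝ) {δ : ℝ} (hδ : 0 < δ) :
    ∃ y : Fin m → Fin (n+1) → ℝ, (∀ j, dist (y j) (c0 j) < δ) ∧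
      ∀ S : Fin (n+2) → Finset (Fin m),
        (∀ i i', i ≠ i' → Disjoint (S i) (S i')) → (∀ i, (S i).card ≤ n+1) →
        ∀ p : Fin (n+1) → ℝ, ¬ (∀ i, p ∈ convexHull ℝ (y '' ↑(S i))) := by
  classical
  have hGopen : ∀ S : Fin (n+2) → Finset (Fin m),
      IsOpen {y : Fin m → Fin (n+1) → ℝ |
        ((∀ i i', i ≠ i' → Disjoint (S i) (S i')) ∧ (∀ i, (S i).card ≤ n+1))
          → gpDet n m S y ≠ 0} := by
    intro S
    by_cases hval : (∀ i i', i ≠ i' → Disjoint (S i) (S i')) ∧ (∀ i, (S i).card ≤ n+1)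
    · have heq : {y : Fin m → Fin (n+1) → ℝ |
          ((∀ i i', i ≠ i' → Disjoint (S i) (S i')) ∧ (∀ i, (S i).card ≤ n+1))
            → gpDet n m S y ≠ 0}
          = {y : Fin m → Fin (n+1) → ℝ | gpDet n m S y ≠ 0} := by
        ext y
        simp only [Set.mem_setOf_eq]
        constructor
        · intro h; exact h hval
        · intro h _; exact h
      rw [heq]
      exact gp_open S
    · have heq : {y : Fin m → Fin (n+1) → ℝ |
          ((∀ i i', i ≠ i' → Disjoint (S i) (S i')) ∧ (∀ i, (S i).card ≤ n+1))
            → gpDet n m S y ≠ 0} = Set.univ := by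
        ext y
        simp only [Set.mem_setOf_eq, Set.mem_univ, iff_true]
        intro hv
        exact absurd hv hval
      rw [heq]
      exact isOpen_univ
  have hGdense : ∀ S : Fin (n+2) → Finset (Fin m),
      Dense {y : Fin m → Fin (n+1) → ℝ |
        ((∀ i i', i ≠ i' → Disjoint (S i) (S i')) ∧ (∀ i, (S i).card ≤ n+1))
          → gpDet n m S y ≠ 0} := by
    intro S
    by_cases hval : (∀ i i', i ≠ i' → Disjoint (S i) (S i')) ∧ (∀ i, (S i).card ≤ n+1)
    · apply Dense.mono _ (gp_dense S hval.1 hval.2)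
      intro y hy
      exact fun _ => hy
    · have heq : {y : Fin m → Fin (n+1) → ℝ |
          ((∀ i i', i ≠ i' → Disjoint (S i) (S i')) ∧ (∀ i, (S i).card ≤ n+1))
            → gpDet n m S y ≠ 0} = Set.univ := by
        ext y
        simp only [Set.mem_setOf_eq, Set.mem_univ, iff_true]
        intro hv
        exact absurd hv hval
      rw [heq]
      exact dense_univ
  have hd := dense_iInter_of_isOpen hGopen hGdense
  obtain ⟨y, hyG, hyb⟩ := hd.exists_mem_open Metric.isOpen_ball
    (Metric.nonempty_ball.mpr hδ)
  refine ⟨y, ?_, ?_⟩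
  · intro j
    calc dist (y j) (c0 j) ≤ dist y c0 := dist_le_pi_dist y c0 j
      _ < δ := Metric.mem_ball.mp hyb
  · intro S hdisj hcard p hp
    have hdet : gpDet n m S y ≠ 0 := (Set.mem_iInter.mp hyG S) ⟨hdisj, hcard⟩
    exact gp_no_common_point hdet p hp

end GenPos

section CoverLemma

lemma finrank_vectorSpan_finset_le (k n : ℕ) (s : Finset (Fin k → ℝ)) (h : s.card ≤ n+1) :
    Module.finrank ℝ (vectorSpan ℝ (↑s : Set (Fin k → ℝ))) ≤ n := by
  classical
  rcases s.eq_empty_or_nonempty with rfl | ⟨p, hp⟩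
  · rw [Finset.coe_empty, vectorSpan_empty]
    simp
  · rw [vectorSpan_eq_span_vsub_set_right_ne ℝ (Finset.mem_coe.mpr hp)]
    have himg : (fun x => x -ᵥ p) '' ((↑s : Set (Fin k → ℝ)) \ {p})
        = ↑((s.erase p).image (fun x => x - p)) := by
      rw [Finset.coe_image, Finset.coe_erase]
      ext v
      simp only [Set.mem_image]
      constructor
      · rintro ⟨x, hx, rfl⟩
        exact ⟨x, hx, by rw [vsub_eq_sub]⟩
      · rintro ⟨x, hx, rfl⟩
        exact ⟨x, hx, by rw [vsub_eq_sub]⟩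
    rw [himg]
    calc Module.finrank ℝ (Submodule.span ℝ (↑((s.erase p).image (fun x => x - p))
            : Set (Fin k → ℝ)))
        ≤ ((s.erase p).image (fun x => x - p)).card := finrank_span_finset_le_card _
      _ ≤ (s.erase p).card := Finset.card_image_le
      _ ≤ s.card - 1 := by rw [Finset.card_erase_of_mem hp]
      _ ≤ n := by
        have : 1 ≤ s.card := Finset.card_pos.mpr ⟨p, hp⟩
        omega

open scoped Classical in
/-- From the `widim` data one can extract, for every `δ > 0`, a finite open cover of mesh
`< δ` and multiplicity `≤ n+1`. -/
lemma exists_good_cover (X : Type*) [MetricSpace X] [CompactSpace X] (n : ℕ)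
    (hw : ∀ ε : ℝ, 0 < ε → ∃ (k : ℕ) (π : X → (Fin k → ℝ)) (Fa : Finset (Finset (Fin k → ℝ))),
      Continuous π ∧ (∀ x, ∃ s ∈ Fa, π x ∈ convexHull ℝ (↑s : Set (Fin k → ℝ))) ∧
      (∀ s ∈ Fa, s.card ≤ n+1) ∧ (∀ x y : X, π x = π y → dist x y < ε))
    {δ : ℝ} (hδ : 0 < δ) :
    ∃ (M : ℕ) (U : Fin M → Set X), (∀ j, IsOpen (U j)) ∧ (∀ x, ∃ j, x ∈ U j) ∧
      (∀ j, ∀ x ∈ U j, ∀ y ∈ U j, dist x y < δ) ∧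
      (∀ x : X, (Finset.univ.filter (fun j => x ∈ U j)).card ≤ n+1) := by
  classical
  by_cases hX : Nonempty X
  case neg =>
    exact ⟨0, fun j => j.elim0, fun j => j.elim0, fun x => absurd ⟨x⟩ hX, fun j => j.elim0,
      fun x => absurd ⟨x⟩ hX⟩
  obtain ⟨ε, hεdef⟩ : ∃ e : ℝ, e = δ/4 := ⟨_, rfl⟩
  have hε0 : 0 < ε := by rw [hεdef]; linarith
  obtain ⟨ρ, hρdef⟩ : ∃ e : ℝ, e = δ/8 := ⟨_, rfl⟩
  have hρ0 : 0 < ρ := by rw [hρdef]; linarith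
  obtain ⟨k, π, Fa, hπc, hπsp, hcard, hfib⟩ := hw ε hε0
  -- a linear map injective on each face hull
  have hWr : ∀ i : Fin Fa.card,
      Module.finrank ℝ (vectorSpan ℝ (↑((Fa.equivFin.symm i) : Finset (Fin k → ℝ))
        : Set (Fin k → ℝ))) ≤ n :=
    fun i => finrank_vectorSpan_finset_le k n _ (hcard _ (Fa.equivFin.symm i).2)
  obtain ⟨L, hL⟩ := exists_linear_injOn n k Fa.card _ hWr
  have hLinj : ∀ s ∈ Fa, ∀ x ∈ convexHull ℝ (↑s : Set (Fin k → ℝ)),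
      ∀ y ∈ convexHull ℝ (↑s : Set (Fin k → ℝ)), L x = L y → x = y := by
    intro s hs x hx y hy hxy
    have hx' : x ∈ affineSpan ℝ (↑s : Set (Fin k → ℝ)) :=
      convexHull_subset_affineSpan (↑s : Set (Fin k → ℝ)) hx
    have hy' : y ∈ affineSpan ℝ (↑s : Set (Fin k → ℝ)) :=
      convexHull_subset_affineSpan (↑s : Set (Fin k → ℝ)) hy
    have hxy' : x - y ∈ vectorSpan ℝ (↑s : Set (Fin k → ℝ)) := by
      have hmem := AffineSubspace.vsub_mem_direction hx' hy'
      rwa [direction_affineSpan, vsub_eq_sub] at hmem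
    have h0 : L (x - y) = 0 := by rw [map_sub, hxy, sub_self]
    have hmem2 : x - y ∈ vectorSpan ℝ (↑((Fa.equivFin.symm (Fa.equivFin ⟨s, hs⟩))
        : Finset (Fin k → ℝ)) : Set (Fin k → ℝ)) := by
      rw [Equiv.symm_apply_apply]
      exact hxy'
    have := hL (Fa.equivFin ⟨s, hs⟩) (x - y) hmem2 h0
    exact sub_eq_zero.mp this
  -- the composed map
  set q : X → (Fin n → ℝ) := fun x => L (π x) with hq
  have hqc : Continuous q := (LinearMap.continuous_of_finiteDimensional L).comp hπc
  -- fibers of q in the complex are finite with at most N points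
  have hAex : ∀ t : Fin n → ℝ, ∃ A : Finset (Fin k → ℝ),
      (∀ v, v ∈ A ↔ ((∃ s ∈ Fa, v ∈ convexHull ℝ (↑s : Set (Fin k → ℝ))) ∧ L v = t))
      ∧ A.card ≤ Fa.card := by
    intro t
    set KF : Set (Fin k → ℝ) :=
      {v | (∃ s ∈ Fa, v ∈ convexHull ℝ (↑s : Set (Fin k → ℝ))) ∧ L v = t} with hKF
    set f : (Fin k → ℝ) → Finset (Fin k → ℝ) := fun v =>
      if h : ∃ s ∈ Fa, v ∈ convexHull ℝ (↑s : Set (Fin k → ℝ)) then h.choose else ∅ with hf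
    have hfmem : ∀ v ∈ KF, f v ∈ Fa ∧ v ∈ convexHull ℝ (↑(f v) : Set (Fin k → ℝ)) := by
      intro v hv
      rw [hf]
      dsimp only
      rw [dif_pos hv.1]
      exact ⟨hv.1.choose_spec.1, hv.1.choose_spec.2⟩
    have hinj : Set.InjOn f KF := by
      intro v hv v' hv' heq
      have h1 := hfmem v hv
      have h2 := hfmem v' hv'
      apply hLinj (f v) h1.1 v h1.2 v' (by rw [heq]; exact h2.2)
      rw [hv.2, hv'.2]
    have hKFfin : KF.Finite := by
      apply Set.Finite.of_finite_image _ hinj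
      apply Set.Finite.subset Fa.finite_toSet
      rintro _ ⟨v, hv, rfl⟩
      exact (hfmem v hv).1
    refine ⟨hKFfin.toFinset, ?_, ?_⟩
    · intro v
      rw [Set.Finite.mem_toFinset]
      exact Iff.rfl
    · apply Finset.card_le_card_of_injOn f
      · intro v hv
        rw [Finset.mem_coe, Set.Finite.mem_toFinset] at hv
        exact (hfmem v hv).1
      · intro v hv v' hv' heq
        rw [Finset.mem_coe, Set.Finite.mem_toFinset] at hv hv'
        exact hinj hv hv' heq
  choose A hAmem hAcard using hAex
  -- uniform fiber lemma
  have hufl : ∃ η₁ : ℝ, 0 < η₁ ∧ ∀ x y : X, dist (π x) (π y) ≤ η₁ → dist x y < ε + ρ := by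
    by_contra hcon
    push_neg at hcon
    have hseq : ∀ j : ℕ, ∃ xy : X × X,
        dist (π xy.1) (π xy.2) ≤ 1/((j:ℝ)+1) ∧ ε + ρ ≤ dist xy.1 xy.2 := by
      intro j
      obtain ⟨x, y, h1, h2⟩ := hcon (1/((j:ℝ)+1)) (by positivity)
      exact ⟨(x, y), h1, h2⟩
    choose u hu1 hu2 using hseq
    obtain ⟨ab, -, φ, hφ, hconv⟩ := isCompact_univ.tendsto_subseq
      (x := u) (fun j => Set.mem_univ _)
    have hd1 : Tendsto (fun j => dist (π (u (φ j)).1) (π (u (φ j)).2)) atTop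
        (𝓝 (dist (π ab.1) (π ab.2))) := by
      have hcont : Continuous fun p : X × X => dist (π p.1) (π p.2) :=
        (hπc.comp continuous_fst).dist (hπc.comp continuous_snd)
      exact (hcont.tendsto ab).comp hconv
    have hz : Tendsto (fun j : ℕ => 1/((φ j : ℝ)+1)) atTop (𝓝 0) :=
      tendsto_one_div_add_atTop_nhds_zero_nat.comp hφ.tendsto_atTop
    have hle : dist (π ab.1) (π ab.2) ≤ 0 :=
      le_of_tendsto_of_tendsto' hd1 hz (fun j => hu1 (φ j))
    have hπeq : π ab.1 = π ab.2 := by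
      have h1 := dist_nonneg (x := π ab.1) (y := π ab.2)
      exact dist_eq_zero.mp (le_antisymm hle h1)
    have hlt := hfib ab.1 ab.2 hπeq
    have hge : ε + ρ ≤ dist ab.1 ab.2 := by
      have hd2 : Tendsto (fun j => dist (u (φ j)).1 (u (φ j)).2) atTop
          (𝓝 (dist ab.1 ab.2)) := by
        have hcont : Continuous fun p : X × X => dist p.1 p.2 :=
          continuous_fst.dist continuous_snd
        exact (hcont.tendsto ab).comp hconv
      exact ge_of_tendsto hd2 (Filter.Eventually.of_forall (fun j => hu2 (φ j)))
    linarith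
  obtain ⟨η₁, hη₁0, hη₁⟩ := hufl
  -- chain scale
  obtain ⟨ηs, hηsdef⟩ : ∃ e : ℝ, e = η₁/((Fa.card : ℝ)+1) := ⟨_, rfl⟩
  have hηs0 : 0 < ηs := by rw [hηsdef]; positivity
  have hcardηs : ∀ t, ((A t).card : ℝ) * ηs ≤ η₁ := by
    intro t
    have h1 : ((A t).card : ℝ) ≤ (Fa.card : ℝ) := by exact_mod_cast hAcard t
    have h2 : (0:ℝ) < (Fa.card : ℝ) + 1 := by positivity
    rw [hηsdef, ← mul_div_assoc, div_le_iff₀ h2]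
    nlinarith [hη₁0.le]
  -- uniform continuity of π at scale ηs
  have huc := CompactSpace.uniformContinuous_of_continuous hπc
  rw [Metric.uniformContinuous_iff] at huc
  obtain ⟨ω, hω0, hωprop⟩ := huc ηs hηs0
  obtain ⟨γ, hγdef⟩ : ∃ e : ℝ, e = min (ω/2) (δ/8) := ⟨_, rfl⟩
  have hγ0 : 0 < γ := by rw [hγdef]; positivity
  have hγω : γ ≤ ω/2 := by rw [hγdef]; exact min_le_left _ _
  have hγδ : γ ≤ δ/8 := by rw [hγdef]; exact min_le_right _ _
  -- pieces
  set P : (Fin n → ℝ) → (Fin k → ℝ) → Set X := fun t v =>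
    {u : X | q u = t ∧ Relation.ReflTransGen
      (fun a b => a ∈ (A t) ∧ b ∈ (A t) ∧ dist a b < ηs) v (π u)} with hP
  have hπmem : ∀ (t : Fin n → ℝ) (u : X), q u = t → π u ∈ A t := by
    intro t u hu
    exact (hAmem t (π u)).mpr ⟨hπsp u, hu⟩
  have hPdiam : ∀ t v, ∀ u ∈ P t v, ∀ u' ∈ P t v, dist u u' < ε + ρ := by
    intro t v u hu u' hu'
    have hchain := Relation.ReflTransGen.trans (chain_symm (A := (↑(A t) : Set (Fin k → ℝ))) hu.2) hu'.2
    have hd := dist_le_card_mul_of_chain hηs0.le hchain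
    apply hη₁
    calc dist (π u) (π u') ≤ (A t).card * ηs := hd
      _ ≤ η₁ := hcardηs t
  have hPsep : ∀ t v v' (u u' : X), u ∈ P t v → u' ∈ P t v' → dist u u' < ω →
      P t v = P t v' := by
    intro t v v' u u' hu hu' hdist
    have hstep : dist (π u) (π u') < ηs := hωprop hdist
    have hch : Relation.ReflTransGen
        (fun a b => a ∈ (A t) ∧ b ∈ (A t) ∧ dist a b < ηs) v v' := by
      apply Relation.ReflTransGen.trans hu.2
      apply Relation.ReflTransGen.trans
        (Relation.ReflTransGen.single ⟨hπmem t u hu.1, hπmem t u' hu'.1, hstep⟩)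
      exact chain_symm (A := (↑(A t) : Set (Fin k → ℝ))) hu'.2
    ext w
    constructor
    · rintro ⟨hw1, hw2⟩
      exact ⟨hw1, Relation.ReflTransGen.trans
        (chain_symm (A := (↑(A t) : Set (Fin k → ℝ))) hch) hw2⟩
    · rintro ⟨hw1, hw2⟩
      exact ⟨hw1, Relation.ReflTransGen.trans hch hw2⟩
  -- neighborhoods of fibers
  have hnb : ∀ x0 : X, ∃ η : ℝ, 0 < η ∧ ∀ u : X, dist (q u) (q x0) ≤ η →
      ∃ x' : X, q x' = q x0 ∧ dist u x' < γ := by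
    intro x0
    by_contra hcon
    push_neg at hcon
    have hseq : ∀ j : ℕ, ∃ u : X, dist (q u) (q x0) ≤ 1/((j:ℝ)+1) ∧
        ∀ x' : X, q x' = q x0 → γ ≤ dist u x' := by
      intro j
      obtain ⟨u, h1, h2⟩ := hcon (1/((j:ℝ)+1)) (by positivity)
      exact ⟨u, h1, fun x' hx' => h2 x' hx'⟩
    choose u hu1 hu2 using hseq
    obtain ⟨a, -, φ, hφ, hconv⟩ := isCompact_univ.tendsto_subseq
      (x := u) (fun j => Set.mem_univ _)
    have hqa : q a = q x0 := by
      have hd1 : Tendsto (fun j => dist (q (u (φ j))) (q x0)) atTop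
          (𝓝 (dist (q a) (q x0))) := by
        have hcont : Continuous fun p : X => dist (q p) (q x0) :=
          (hqc.dist continuous_const)
        exact (hcont.tendsto a).comp hconv
      have hz : Tendsto (fun j : ℕ => 1/((φ j : ℝ)+1)) atTop (𝓝 0) :=
        tendsto_one_div_add_atTop_nhds_zero_nat.comp hφ.tendsto_atTop
      have hle : dist (q a) (q x0) ≤ 0 :=
        le_of_tendsto_of_tendsto' hd1 hz (fun j => hu1 (φ j))
      exact dist_eq_zero.mp (le_antisymm hle dist_nonneg)
    have hz2 : Tendsto (fun j => dist (u (φ j)) a) atTop (𝓝 0) := by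
      rw [← tendsto_iff_dist_tendsto_zero]
      exact hconv
    have : γ ≤ 0 := ge_of_tendsto hz2
      (Filter.Eventually.of_forall (fun j => hu2 (φ j) a hqa))
    linarith
  choose ηf hηf0 hηfprop using hnb
  -- finite subcover of the base
  have hcovB : (Set.univ : Set X) ⊆ ⋃ x0 : X, q ⁻¹' (Metric.ball (q x0) (ηf x0 / 2)) := by
    intro x _
    apply Set.mem_iUnion.mpr
    refine ⟨x, ?_⟩
    simp only [Set.mem_preimage, Metric.mem_ball, dist_self]
    have := hηf0 x
    linarith
  obtain ⟨T, hT⟩ := isCompact_univ.elim_finite_subcover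
    (fun x0 : X => q ⁻¹' (Metric.ball (q x0) (ηf x0 / 2)))
    (fun x0 => (Metric.isOpen_ball).preimage hqc) hcovB
  have hTne : T.Nonempty := by
    obtain ⟨x⟩ := hX
    have := hT (Set.mem_univ x)
    rw [Set.mem_iUnion₂] at this
    obtain ⟨x0, hx0, -⟩ := this
    exact ⟨x0, hx0⟩
  set η₀ : ℝ := (T.image (fun x0 => ηf x0 / 2)).min' (hTne.image _) with hη₀
  have hη₀pos : 0 < η₀ := by
    have hmem := (T.image (fun x0 => ηf x0 / 2)).min'_mem (hTne.image _)
    rw [Finset.mem_image] at hmem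
    obtain ⟨x0, hx0, hval⟩ := hmem
    rw [hη₀, ← hval]
    have := hηf0 x0
    linarith
  have hη₀le : ∀ x0 ∈ T, η₀ ≤ ηf x0 / 2 := by
    intro x0 hx0
    exact Finset.min'_le _ _ (Finset.mem_image_of_mem _ hx0)
  -- bricks
  obtain ⟨Ub, hUbopen, hUbcov, hUbdiam, hUbuniq⟩ := brick_cover n hη₀pos
  -- cover candidates
  set cond : (Fin (n+1) × (Fin n → ℤ)) → Prop := fun p =>
    ∃ x0, x0 ∈ T ∧ ∃ u : X, q u ∈ Ub p ∧ dist (q u) (q x0) < ηf x0 / 2 with hcond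
  set W : ((Fin (n+1) × (Fin n → ℤ)) × (Fin k → ℝ)) → Set X := fun pv =>
    if h : cond pv.1 then
      (q ⁻¹' (Ub pv.1)) ∩ (⋃ u' ∈ P (q h.choose) pv.2, Metric.ball u' γ)
    else ∅ with hWdef
  have hWopen : ∀ pv, IsOpen (W pv) := by
    intro pv
    rw [hWdef]
    dsimp only
    split_ifs with h
    · exact ((hUbopen _).preimage hqc).inter
        (isOpen_iUnion (fun u' => isOpen_iUnion (fun _ => Metric.isOpen_ball)))
    · exact isOpen_empty
  have hWsub : ∀ pv (x : X), x ∈ W pv → q x ∈ Ub pv.1 := by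
    intro pv x hx
    rw [hWdef] at hx
    dsimp only at hx
    split_ifs at hx with h
    · exact hx.1
    · exact absurd hx (Set.notMem_empty x)
  have hbrick_t : ∀ (p) (h : cond p), ∀ u : X, q u ∈ Ub p →
      dist (q u) (q h.choose) ≤ ηf h.choose := by
    intro p h u hu
    obtain ⟨hx0T, u0, hu0b, hu0d⟩ := h.choose_spec
    have h1 : dist (q u) (q u0) < η₀ := hUbdiam p _ _ hu hu0b
    have h2 := hη₀le _ hx0T
    calc dist (q u) (q h.choose) ≤ dist (q u) (q u0) + dist (q u0) (q h.choose) :=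
        dist_triangle _ _ _
      _ ≤ ηf h.choose / 2 + ηf h.choose / 2 :=
          add_le_add (le_trans h1.le h2) hu0d.le
      _ = ηf h.choose := by ring
  have hWcov : ∀ x : X, ∃ pv, x ∈ W pv := by
    intro x
    obtain ⟨p, hp⟩ := hUbcov (q x)
    have hc : cond p := by
      have hx0 := hT (Set.mem_univ x)
      rw [Set.mem_iUnion₂] at hx0
      obtain ⟨x0, hx0T, hxball⟩ := hx0
      rw [Set.mem_preimage, Metric.mem_ball] at hxball
      exact ⟨x0, hx0T, x, hp, hxball⟩
    have hclose := hbrick_t p hc x hp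
    obtain ⟨x', hx'q, hx'd⟩ := hηfprop hc.choose x hclose
    refine ⟨(p, π x'), ?_⟩
    rw [hWdef]
    dsimp only
    rw [dif_pos hc]
    refine ⟨hp, ?_⟩
    rw [Set.mem_iUnion₂]
    exact ⟨x', ⟨hx'q, Relation.ReflTransGen.refl⟩, Metric.mem_ball.mpr hx'd⟩
  have hWdiam : ∀ pv, ∀ x ∈ W pv, ∀ y ∈ W pv, dist x y < δ := by
    intro pv x hx y hy
    rw [hWdef] at hx hy
    dsimp only at hx hy
    split_ifs at hx hy with h
    · obtain ⟨hxb, hxth⟩ := hx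
      obtain ⟨hyb, hyth⟩ := hy
      rw [Set.mem_iUnion₂] at hxth hyth
      obtain ⟨u1, hu1P, hu1b⟩ := hxth
      obtain ⟨u2, hu2P, hu2b⟩ := hyth
      have hd12 := hPdiam _ _ u1 hu1P u2 hu2P
      rw [Metric.mem_ball] at hu1b hu2b
      have hεval : ε = δ/4 := hεdef
      have hρval : ρ = δ/8 := hρdef
      calc dist x y ≤ dist x u1 + dist u1 u2 + dist u2 y := dist_triangle4 x u1 u2 y
        _ < γ + (ε + ρ) + γ := by
            have h3 : dist u2 y = dist y u2 := dist_comm _ _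
            linarith [hu1b, hd12, hu2b, h3]
        _ < δ := by linarith
    · exact absurd hx (Set.notMem_empty x)
  have hWsame : ∀ p v v' (x : X), x ∈ W (p,v) → x ∈ W (p,v') → W (p,v) = W (p,v') := by
    intro p v v' x hx hx'
    rw [hWdef] at hx hx' ⊢
    dsimp only at hx hx' ⊢
    split_ifs at hx hx' ⊢ with h
    · obtain ⟨hxb, hxth⟩ := hx
      obtain ⟨hx'b, hx'th⟩ := hx'
      rw [Set.mem_iUnion₂] at hxth hx'th
      obtain ⟨u1, hu1P, hu1b⟩ := hxth
      obtain ⟨u2, hu2P, hu2b⟩ := hx'th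
      rw [Metric.mem_ball] at hu1b hu2b
      have hd12 : dist u1 u2 < ω := by
        have := dist_triangle u1 x u2
        have h1 : dist u1 x = dist x u1 := dist_comm _ _
        linarith
      rw [hPsep _ _ v' u1 u2 hu1P hu2P hd12]
    · exact absurd hx (Set.notMem_empty x)
  -- final assembly
  have hcovW : (Set.univ : Set X) ⊆ ⋃ pv, W pv := fun x _ => Set.mem_iUnion.mpr (hWcov x)
  obtain ⟨τ, hτ⟩ := isCompact_univ.elim_finite_subcover W hWopen hcovW
  set 𝒞 : Finset (Set X) := τ.image W with hCdef
  have hpvex : ∀ jj : Fin 𝒞.card, ∃ pv, pv ∈ τ ∧ W pv = (𝒞.equivFin.symm jj : Set X) := by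
    intro jj
    have h := (𝒞.equivFin.symm jj).2
    exact Finset.mem_image.mp h
  choose pvf hpvτ hpvW using hpvex
  refine ⟨𝒞.card, fun jj => (𝒞.equivFin.symm jj : Set X), ?_, ?_, ?_, ?_⟩
  · intro jj
    dsimp only
    rw [← hpvW jj]
    exact hWopen _
  · intro x
    have hx := hτ (Set.mem_univ x)
    rw [Set.mem_iUnion₂] at hx
    obtain ⟨pv, hpvmem, hxpv⟩ := hx
    have hmem : W pv ∈ 𝒞 := Finset.mem_image_of_mem W hpvmem
    refine ⟨𝒞.equivFin ⟨W pv, hmem⟩, ?_⟩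
    dsimp only
    rw [Equiv.symm_apply_apply]
    exact hxpv
  · intro jj x hx y hy
    dsimp only at hx hy
    rw [← hpvW jj] at hx hy
    exact hWdiam _ x hx y hy
  · intro x
    have hcard2 : (Finset.univ.filter
        (fun jj : Fin 𝒞.card => x ∈ (𝒞.equivFin.symm jj : Set X))).card
        ≤ (Finset.univ : Finset (Fin (n+1))).card := by
      apply Finset.card_le_card_of_injOn (f := fun jj => (pvf jj).1.1)
      · intro jj _
        exact Finset.mem_univ _
      · intro jj hjj jj' hjj' heq
        simp only [Finset.coe_filter, Set.mem_setOf_eq] at hjj hjj'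
        have hxjj : x ∈ W (pvf jj) := by rw [hpvW jj]; exact hjj.2
        have hxjj' : x ∈ W (pvf jj') := by rw [hpvW jj']; exact hjj'.2
        have hb1 : q x ∈ Ub (pvf jj).1 := hWsub _ x hxjj
        have hb2 : q x ∈ Ub (pvf jj').1 := hWsub _ x hxjj'
        dsimp only at heq
        have hz : (pvf jj).1.2 = (pvf jj').1.2 := by
          apply hUbuniq (q x) ((pvf jj).1.1)
          · have he : ((pvf jj).1.1, (pvf jj).1.2) = (pvf jj).1 := rfl
            rw [he]; exact hb1
          · have he : ((pvf jj).1.1, (pvf jj').1.2) = (pvf jj').1 := by rw [heq]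
            rw [he]; exact hb2
        have hpeq : (pvf jj).1 = (pvf jj').1 := Prod.ext heq hz
        have hWeq : W (pvf jj) = W (pvf jj') := by
          have h1 : x ∈ W ((pvf jj).1, (pvf jj').2) := by
            have he : ((pvf jj).1, (pvf jj').2) = pvf jj' := by rw [hpeq]
            rw [he]; exact hxjj'
          have h2 : x ∈ W ((pvf jj).1, (pvf jj).2) := by
            have he : ((pvf jj).1, (pvf jj).2) = pvf jj := rfl
            rw [he]; exact hxjj
          have h3 := hWsame (pvf jj).1 (pvf jj).2 (pvf jj').2 x h2 h1
          calc W (pvf jj) = W ((pvf jj).1, (pvf jj).2) := rfl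
            _ = W ((pvf jj).1, (pvf jj').2) := h3
            _ = W (pvf jj') := by rw [hpeq]
        have hUeq : (𝒞.equivFin.symm jj : Set X) = (𝒞.equivFin.symm jj' : Set X) := by
          rw [← hpvW jj, ← hpvW jj', hWeq]
        have hsub := Subtype.ext hUeq
        exact 𝒞.equivFin.symm.injective hsub
    simpa using hcard2

end CoverLemma


section OpenPart

lemma open_part {X : Type*} [MetricSpace X] [CompactSpace X] (n : ℕ)
    (F : Fin (n+2) → Set X) (hFcl : ∀ i, IsClosed (F i)) :
    IsOpen {f : C(X, Fin (n + 1) → ℝ) | ⋂ i, ⇑f '' F i = ∅} := by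
  classical
  by_cases hFe : ∃ i, F i = ∅
  · obtain ⟨i, hi⟩ := hFe
    have huniv : {f : C(X, Fin (n + 1) → ℝ) | ⋂ i, ⇑f '' F i = ∅} = Set.univ := by
      apply Set.eq_univ_of_forall
      intro f
      apply Set.eq_empty_of_subset_empty
      intro p hp
      rw [Set.mem_iInter] at hp
      have := hp i
      rw [hi] at this
      simpa using this
    rw [huniv]
    exact isOpen_univ
  push_neg at hFe
  have hFne : ∀ i, (F i).Nonempty := hFe
  rw [Metric.isOpen_iff]
  intro f hf
  have hCc : ∀ i, IsCompact (⇑f '' F i) := fun i =>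
    ((hFcl i).isCompact).image f.continuous
  have hCcl : ∀ i, IsClosed (⇑f '' F i) := fun i => (hCc i).isClosed
  have hCne : ∀ i, (⇑f '' F i).Nonempty := fun i => (hFne i).image f
  -- a uniform gap
  have hgap : ∃ r : ℝ, 0 < r ∧ ∀ p : Fin (n+1) → ℝ, ∃ i, r ≤ infDist p (⇑f '' F i) := by
    by_contra hcon
    push_neg at hcon
    have hseq : ∀ j : ℕ, ∃ p : Fin (n+1) → ℝ, ∀ i, infDist p (⇑f '' F i) < 1/((j:ℝ)+1) := by
      intro j
      obtain ⟨p, hp⟩ := hcon (1/((j:ℝ)+1)) (by positivity)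
      exact ⟨p, hp⟩
    choose p hp using hseq
    -- points of C 0 close to p j
    have hnear : ∀ j : ℕ, ∃ a ∈ ⇑f '' F 0, dist (p j) a < 1/((j:ℝ)+1) := by
      intro j
      exact (Metric.infDist_lt_iff (hCne 0)).mp (hp j 0)
    choose a haC had using hnear
    obtain ⟨b, hbC, φ, hφ, hconv⟩ := (hCc 0).tendsto_subseq haC
    have hpconv : Tendsto (fun j => p (φ j)) atTop (𝓝 b) := by
      rw [tendsto_iff_dist_tendsto_zero]
      have hbound : ∀ j, dist (p (φ j)) b ≤ 1/((φ j : ℝ)+1) + dist (a (φ j)) b := by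
        intro j
        calc dist (p (φ j)) b ≤ dist (p (φ j)) (a (φ j)) + dist (a (φ j)) b :=
            dist_triangle _ _ _
          _ ≤ 1/((φ j : ℝ)+1) + dist (a (φ j)) b := by
              linarith [had (φ j)]
      apply squeeze_zero (fun j => dist_nonneg) hbound
      have h1 : Tendsto (fun j : ℕ => 1/((φ j : ℝ)+1)) atTop (𝓝 0) :=
        tendsto_one_div_add_atTop_nhds_zero_nat.comp hφ.tendsto_atTop
      have h2 : Tendsto (fun j => dist (a (φ j)) b) atTop (𝓝 0) := by
        rw [← tendsto_iff_dist_tendsto_zero]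
        exact hconv
      simpa using h1.add h2
    have hbmem : ∀ i, b ∈ ⇑f '' F i := by
      intro i
      have hd : Tendsto (fun j => infDist (p (φ j)) (⇑f '' F i)) atTop
          (𝓝 (infDist b (⇑f '' F i))) :=
        ((continuous_infDist_pt (⇑f '' F i)).tendsto b).comp hpconv
      have hz : Tendsto (fun j : ℕ => 1/((φ j : ℝ)+1)) atTop (𝓝 0) :=
        tendsto_one_div_add_atTop_nhds_zero_nat.comp hφ.tendsto_atTop
      have hle : infDist b (⇑f '' F i) ≤ 0 :=
        le_of_tendsto_of_tendsto' hd hz (fun j => (hp (φ j) i).le)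
      have h0 : infDist b (⇑f '' F i) = 0 :=
        le_antisymm hle (Metric.infDist_nonneg)
      rw [← (hCcl i).closure_eq]
      exact (Metric.mem_closure_iff_infDist_zero (hCne i)).mpr h0
    have : b ∈ ⋂ i, ⇑f '' F i := Set.mem_iInter.mpr hbmem
    rw [hf] at this
    exact this
  obtain ⟨r, hr0, hr⟩ := hgap
  refine ⟨r, hr0, ?_⟩
  intro g hg
  rw [Metric.mem_ball] at hg
  apply Set.eq_empty_of_subset_empty
  intro p hp
  rw [Set.mem_iInter] at hp
  obtain ⟨i, hi⟩ := hr p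
  obtain ⟨x, hx, hgx⟩ := hp i
  have h1 : infDist p (⇑f '' F i) ≤ dist p (f x) :=
    Metric.infDist_le_dist_of_mem ⟨x, hx, rfl⟩
  have h2 : dist p (f x) = dist (g x) (f x) := by rw [← hgx]
  have h3 : dist (g x) (f x) ≤ dist g f := ContinuousMap.dist_apply_le_dist x
  linarith
end OpenPart

section Main
open Metric

lemma widim_digest (X : Type*) [MetricSpace X] [CompactSpace X] (n : ℕ)
    (hdim : topDim X (fun x y => dist x y) ≤ (n : ℕ∞)) :
    ∀ ε0 : ℝ, 0 < ε0 → ∃ (k : ℕ) (π : X → (Fin k → ℝ)) (Fa : Finset (Finset (Fin k → ℝ))),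
      Continuous π ∧ (∀ x, ∃ s ∈ Fa, π x ∈ convexHull ℝ (↑s : Set (Fin k → ℝ))) ∧
      (∀ s ∈ Fa, s.card ≤ n+1) ∧ (∀ x y : X, π x = π y → dist x y < ε0) := by
  intro ε0 hε0
  have hlt : topDim X (fun x y => dist x y) < (n:ℕ∞)+1 := by
    apply lt_of_le_of_lt hdim
    have h1 : ((n:ℕ):ℕ∞) < ((n+1 : ℕ) : ℕ∞) := by exact_mod_cast Nat.lt_succ_self n
    rwa [Nat.cast_add, Nat.cast_one] at h1
  have hev : ∀ᶠ ε in 𝓝[>] (0:ℝ), widimEps X (fun x y => dist x y) ε < (n:ℕ∞)+1 :=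
    eventually_lt_of_limsup_lt hlt
  have hmem : ∀ᶠ ε in 𝓝[>] (0:ℝ), ε ∈ Set.Ioo (0:ℝ) ε0 :=
    Filter.eventually_of_mem (Ioo_mem_nhdsGT hε0) (fun _ h => h)
  obtain ⟨ε, hε1, hε2⟩ := (hev.and hmem).exists
  have hSex : ∃ a ∈ {a : ℕ∞ | ∃ m : ℕ, a = (m : ℕ∞) ∧
      ∃ (k : ℕ) (K : Geometry.SimplicialComplex ℝ (Fin k → ℝ)), K.faces.Finite ∧
        (∀ s ∈ K.faces, s.card ≤ m + 1) ∧
        ∃ f : X → K.space, Continuous f ∧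
          ∀ p : K.space, setDiam (fun x y => dist x y) (f ⁻¹' {p}) < ENNReal.ofReal ε},
      a < (n:ℕ∞)+1 := by
    by_contra hcon
    push_neg at hcon
    have : (n:ℕ∞)+1 ≤ widimEps X (fun x y => dist x y) ε := le_sInf (fun a ha => hcon a ha)
    exact absurd hε1 (not_lt.mpr this)
  obtain ⟨a, ⟨m, rfl, k, K, hKfin, hKcard, f, hfc, hfdiam⟩, ham⟩ := hSex
  have hmn : m ≤ n := by
    have : (m:ℕ) < n+1 := by exact_mod_cast (by rwa [← Nat.cast_add_one] at ham :
      ((m:ℕ):ℕ∞) < ((n+1:ℕ):ℕ∞))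
    omega
  refine ⟨k, fun x => (f x : Fin k → ℝ), hKfin.toFinset, ?_, ?_, ?_, ?_⟩
  · exact continuous_subtype_val.comp hfc
  · intro x
    have hsp := (f x).2
    rw [Geometry.SimplicialComplex.mem_space_iff] at hsp
    obtain ⟨s, hs, hmem⟩ := hsp
    exact ⟨s, hKfin.mem_toFinset.mpr hs, hmem⟩
  · intro s hs
    have := hKcard s (hKfin.mem_toFinset.mp hs)
    omega
  · intro x y hxy
    have hfeq : f x = f y := Subtype.ext hxy
    have hx : x ∈ f ⁻¹' {f x} := rfl
    have hy : y ∈ f ⁻¹' {f x} := by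
      simp [Set.mem_preimage, hfeq]
    have h1 : ENNReal.ofReal (dist x y) ≤
        setDiam (fun x y => dist x y) (f ⁻¹' {f x}) := by
      unfold setDiam
      apply le_iSup_of_le x
      apply le_iSup_of_le hx
      apply le_iSup_of_le y
      apply le_iSup_of_le hy
      exact le_rfl
    have h2 := lt_of_le_of_lt h1 (hfdiam (f x))
    rw [ENNReal.ofReal_lt_ofReal_iff hε2.1] at h2
    exact lt_trans h2 hε2.2


open scoped Classical in
lemma dense_part (X : Type*) [MetricSpace X] [CompactSpace X] (n : ℕ)
    (hdim : topDim X (fun x y => dist x y) ≤ (n : ℕ∞))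
    (F : Fin (n + 2) → Set X) (hFcl : ∀ i, IsClosed (F i))
    (hFdisj : ∀ i j, i ≠ j → F i ∩ F j = ∅) :
    Dense {f : C(X, Fin (n + 1) → ℝ) | ⋂ i, ⇑f '' F i = ∅} := by
  classical
  by_cases hFe : ∃ i, F i = ∅
  · obtain ⟨i, hi⟩ := hFe
    have huniv : {f : C(X, Fin (n + 1) → ℝ) | ⋂ i, ⇑f '' F i = ∅} = Set.univ := by
      apply Set.eq_univ_of_forall
      intro f
      apply Set.eq_empty_of_subset_empty
      intro p hp
      rw [Set.mem_iInter] at hp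
      have h := hp i
      rw [hi] at h
      simpa using h
    rw [huniv]; exact dense_univ
  push_neg at hFe
  have hFne : ∀ i, (F i).Nonempty := hFe
  have hX : Nonempty X := ⟨(hFne 0).some⟩
  -- separation between the sets F i
  have hpair : ∀ ij : Fin (n+2) × Fin (n+2), ∃ c : ℝ, 0 < c ∧
      (ij.1 ≠ ij.2 → ∀ x ∈ F ij.1, ∀ y ∈ F ij.2, c ≤ dist x y) := by
    rintro ⟨i, j⟩
    by_cases hij : i = j
    · exact ⟨1, one_pos, fun h => absurd hij h⟩
    · have hcomp : IsCompact ((F i) ×ˢ (F j)) :=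
        ((hFcl i).isCompact).prod ((hFcl j).isCompact)
      have hne : ((F i) ×ˢ (F j)).Nonempty := (hFne i).prod (hFne j)
      have hcont : ContinuousOn (fun p : X × X => dist p.1 p.2) ((F i) ×ˢ (F j)) :=
        (continuous_fst.dist continuous_snd).continuousOn
      obtain ⟨⟨av, bv⟩, hab, hmin⟩ := hcomp.exists_isMinOn hne hcont
      have habne : av ≠ bv := by
        intro h
        have h1 : av ∈ F i := (Set.mem_prod.mp hab).1
        have h2 : bv ∈ F j := (Set.mem_prod.mp hab).2
        rw [h] at h1
        have hmem : bv ∈ F i ∩ F j := ⟨h1, h2⟩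
        rw [hFdisj i j hij] at hmem
        exact hmem
      refine ⟨dist av bv, dist_pos.mpr habne, fun _ x hx y hy => ?_⟩
      have hm := hmin (Set.mem_prod.mpr ⟨hx, hy⟩ : (x, y) ∈ (F i) ×ˢ (F j))
      simpa using hm
  choose sepf hsepf0 hsepfprop using hpair
  have hsne : (Finset.univ.image sepf).Nonempty :=
    Finset.Nonempty.image Finset.univ_nonempty _
  obtain ⟨sep, hsepdef⟩ : ∃ e : ℝ, e = (Finset.univ.image sepf).min' hsne := ⟨_, rfl⟩
  have hsep0 : 0 < sep := by
    have hmem := (Finset.univ.image sepf).min'_mem hsne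
    rw [Finset.mem_image] at hmem
    obtain ⟨ij, _, hval⟩ := hmem
    rw [hsepdef, ← hval]
    exact hsepf0 ij
  have hseple : ∀ ij, sep ≤ sepf ij := by
    intro ij
    rw [hsepdef]
    exact Finset.min'_le _ _ (Finset.mem_image_of_mem _ (Finset.mem_univ ij))
  -- density
  rw [Metric.dense_iff]
  intro f δ hδ
  have huf := CompactSpace.uniformContinuous_of_continuous f.continuous
  rw [Metric.uniformContinuous_iff] at huf
  obtain ⟨τ, hτ0, hτ⟩ := huf (δ/4) (by linarith)
  obtain ⟨δ0, hδ0def⟩ : ∃ e : ℝ, e = min τ sep := ⟨_, rfl⟩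
  have hδ0pos : 0 < δ0 := by rw [hδ0def]; exact lt_min hτ0 hsep0
  obtain ⟨M, U, hUopen, hUcov, hUdiam, hUmult⟩ :=
    exists_good_cover X n (widim_digest X n hdim) hδ0pos
  -- partition of unity
  set g0 : Fin M → X → ℝ := fun j x =>
    if _ : ((U j)ᶜ : Set X).Nonempty then infDist x (U j)ᶜ else 1 with hg0def
  have hg0c : ∀ j, Continuous (g0 j) := by
    intro j
    rw [hg0def]
    dsimp only
    split_ifs with h
    · exact continuous_infDist_pt _
    · exact continuous_const
  have hg0nn : ∀ j x, 0 ≤ g0 j x := by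
    intro j x
    rw [hg0def]; dsimp only
    split_ifs with h
    · exact infDist_nonneg
    · norm_num
  have hg0pos : ∀ j x, x ∈ U j → 0 < g0 j x := by
    intro j x hx
    rw [hg0def]; dsimp only
    split_ifs with h
    · have h1 : x ∉ closure ((U j)ᶜ : Set X) := by
        rw [(hUopen j).isClosed_compl.closure_eq]
        simpa using hx
      have h2 : infDist x ((U j)ᶜ : Set X) ≠ 0 := by
        intro h0
        exact h1 ((Metric.mem_closure_iff_infDist_zero h).mpr h0)
      exact lt_of_le_of_ne infDist_nonneg (Ne.symm h2)
    · norm_num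
  have hg0supp : ∀ j x, g0 j x ≠ 0 → x ∈ U j := by
    intro j x hne2
    rw [hg0def] at hne2; dsimp only at hne2
    by_contra hx
    split_ifs at hne2 with h
    · exact hne2 (infDist_zero_of_mem hx)
    · apply hx
      have h1 : ((U j)ᶜ : Set X) = ∅ := Set.not_nonempty_iff_eq_empty.mp h
      have h2 : (U j) = Set.univ := by rwa [Set.compl_empty_iff] at h1
      rw [h2]; trivial
  set D : X → ℝ := fun x => ∑ j, g0 j x with hDdef
  have hDc : Continuous D := by
    rw [hDdef]; exact continuous_finset_sum _ (fun j _ => hg0c j)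
  have hDpos : ∀ x, 0 < D x := by
    intro x
    obtain ⟨j, hj⟩ := hUcov x
    rw [hDdef]
    exact Finset.sum_pos' (fun j' _ => hg0nn j' x) ⟨j, Finset.mem_univ j, hg0pos j x hj⟩
  set φ : Fin M → X → ℝ := fun j x => g0 j x / D x with hφdef
  have hφc : ∀ j, Continuous (φ j) := fun j => (hg0c j).div hDc (fun x => (hDpos x).ne')
  have hφnn : ∀ j x, 0 ≤ φ j x := fun j x => div_nonneg (hg0nn j x) (hDpos x).le
  have hφsum : ∀ x, ∑ j, φ j x = 1 := by
    intro x
    rw [hφdef]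
    dsimp only
    rw [← Finset.sum_div]
    exact div_self (hDpos x).ne'
  have hφsupp : ∀ j x, φ j x ≠ 0 → x ∈ U j := by
    intro j x h
    apply hg0supp j x
    intro h0
    apply h
    rw [hφdef]; dsimp only; rw [h0, zero_div]
  -- centers and generic points
  set xc : Fin M → X := fun j => if h : (U j).Nonempty then h.some else hX.some with hxcdef
  have hxc : ∀ j, (U j).Nonempty → xc j ∈ U j := by
    intro j hne2
    rw [hxcdef]; dsimp only; rw [dif_pos hne2]; exact hne2.some_mem
  obtain ⟨y, hyclose, hygen⟩ := exists_generic_points n M (fun j => f (xc j))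
    (show (0:ℝ) < δ/4 by linarith)
  set gfun : X → (Fin (n+1) → ℝ) := fun x => ∑ j, φ j x • y j with hgdef
  have hgc : Continuous gfun := by
    rw [hgdef]
    apply continuous_finset_sum
    intro j _
    exact (hφc j).smul continuous_const
  set g : C(X, Fin (n+1) → ℝ) := ⟨gfun, hgc⟩ with hgdef2
  have hgapp : ∀ x, g x = ∑ j, φ j x • y j := fun x => rfl
  -- distance estimate
  have hkey : ∀ x j, φ j x ≠ 0 → ‖y j - f x‖ ≤ δ/2 := by
    intro x j hne2
    have hxU := hφsupp j x hne2
    have hUne : (U j).Nonempty := ⟨x, hxU⟩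
    have h1 : dist (y j) (f (xc j)) < δ/4 := hyclose j
    have h2 : dist (f (xc j)) (f x) < δ/4 := by
      apply hτ
      have h3 := hUdiam j (xc j) (hxc j hUne) x hxU
      rw [hδ0def] at h3
      exact lt_of_lt_of_le h3 (min_le_left _ _)
    calc ‖y j - f x‖ = dist (y j) (f x) := (dist_eq_norm _ _).symm
      _ ≤ dist (y j) (f (xc j)) + dist (f (xc j)) (f x) := dist_triangle _ _ _
      _ ≤ δ/2 := by linarith
  have hdistgf : dist g f ≤ δ/2 := by
    rw [ContinuousMap.dist_le (by linarith)]
    intro x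
    have hrw : g x - f x = ∑ j, φ j x • (y j - f x) := by
      calc g x - f x = (∑ j, φ j x • y j) - (1 : ℝ) • f x := by rw [one_smul, hgapp]
        _ = (∑ j, φ j x • y j) - (∑ j, φ j x) • f x := by rw [hφsum x]
        _ = ∑ j, (φ j x • y j - φ j x • f x) := by
            rw [Finset.sum_smul, ← Finset.sum_sub_distrib]
        _ = ∑ j, φ j x • (y j - f x) := by
            apply Finset.sum_congr rfl
            intro j _
            rw [smul_sub]
    rw [dist_eq_norm, hrw]
    calc ‖∑ j, φ j x • (y j - f x)‖ ≤ ∑ j, ‖φ j x • (y j - f x)‖ := norm_sum_le _ _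
      _ ≤ ∑ j, φ j x * (δ/2) := by
          apply Finset.sum_le_sum
          intro j _
          rw [norm_smul, Real.norm_eq_abs, abs_of_nonneg (hφnn j x)]
          by_cases hj : φ j x = 0
          · rw [hj]
            simp
          · exact mul_le_mul_of_nonneg_left (hkey x j hj) (hφnn j x)
      _ = δ/2 := by rw [← Finset.sum_mul, hφsum x, one_mul]
  refine ⟨g, Set.mem_inter ?_ ?_⟩
  · rw [Metric.mem_ball]
    linarith
  · show ⋂ i, ⇑g '' F i = ∅
    rw [Set.eq_empty_iff_forall_notMem]
    intro p hp
    rw [Set.mem_iInter] at hp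
    have hc : ∀ i, ∃ av, av ∈ F i ∧ g av = p := by
      intro i
      obtain ⟨av, hav, hgav⟩ := hp i
      exact ⟨av, hav, hgav⟩
    choose a ha hga using hc
    set S : Fin (n+2) → Finset (Fin M) := fun i =>
      Finset.univ.filter (fun j => φ j (a i) ≠ 0) with hSdef
    have hSdisj : ∀ i i', i ≠ i' → Disjoint (S i) (S i') := by
      intro i i' hii
      rw [Finset.disjoint_left]
      intro j hj hj'
      rw [hSdef, Finset.mem_filter] at hj hj'
      have h1 := hφsupp j (a i) hj.2
      have h2 := hφsupp j (a i') hj'.2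
      have h3 := hUdiam j (a i) h1 (a i') h2
      have h4 : sep ≤ dist (a i) (a i') := by
        calc sep ≤ sepf (i, i') := hseple (i, i')
          _ ≤ dist (a i) (a i') := hsepfprop (i, i') hii (a i) (ha i) (a i') (ha i')
      rw [hδ0def] at h3
      have h5 := lt_of_lt_of_le h3 (min_le_right _ _)
      linarith
    have hScard : ∀ i, (S i).card ≤ n+1 := by
      intro i
      apply le_trans (Finset.card_le_card ?_) (hUmult (a i))
      intro j hj
      rw [hSdef, Finset.mem_filter] at hj
      rw [Finset.mem_filter]
      exact ⟨Finset.mem_univ _, hφsupp j (a i) hj.2⟩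
    apply hygen S hSdisj hScard p
    intro i
    have hsum' : ∑ j ∈ S i, φ j (a i) = 1 := by
      rw [hSdef]
      rw [Finset.sum_filter_ne_zero]
      exact hφsum (a i)
    have hcm : (S i).centerMass (fun j => φ j (a i)) y = p := by
      rw [Finset.centerMass_eq_of_sum_1 _ y hsum']
      rw [← hga i]
      rw [hgapp]
      refine Finset.sum_subset (Finset.subset_univ _) ?_
      intro j _ hj
      rw [hSdef, Finset.mem_filter] at hj
      push_neg at hj
      rw [hj (Finset.mem_univ _), zero_smul]
    rw [← hcm]
    apply Finset.centerMass_mem_convexHull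
    · intro j _; exact hφnn j (a i)
    · rw [hsum']; norm_num
    · intro j hj
      exact Set.mem_image_of_mem y (Finset.mem_coe.mpr hj)

end Main

/-- If `dim X ≤ n` and `F₁, …, F_{n+2}` are pairwise disjoint closed subsets of `X`, then
`{f ∈ C(X, ℝ^{n+1}) | f(F₁) ∩ ⋯ ∩ f(F_{n+2}) = ∅}` is open and dense. -/
theorem open_dense_separating_maps (X : Type*) [MetricSpace X] [CompactSpace X] (n : ℕ)
    (hdim : topDim X (fun x y => dist x y) ≤ (n : ℕ∞))
    (F : Fin (n + 2) → Set X) (hFcl : ∀ i, IsClosed (F i))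
    (hFdisj : ∀ i j, i ≠ j → F i ∩ F j = ∅) :
    IsOpen {f : C(X, Fin (n + 1) → ℝ) | ⋂ i, ⇑f '' F i = ∅} ∧
      Dense {f : C(X, Fin (n + 1) → ℝ) | ⋂ i, ⇑f '' F i = ∅} :=
  ⟨open_part n F hFcl, dense_part X n hdim F hFcl hFdisj⟩
end
end
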